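/- arXiv:1411.1087 — 5 statements merged into one kernel-verified Lean document; each statement's English description precedes it below -/
import Mathlib

section
/- Let M be a symmetric n×n real matrix of rank r with eigendecomposition M = U Σ Uᵀ, and suppose M is μ-incoherent, i.e., ‖eᵢᵀU‖₂ ≤ μ√r/√n for every standard basis vector eᵢ. Then for any symmetric n×n matrix B, the entrywise maximum norm satisfies ‖M B M − M‖_∞ ≤ (μ²r/n)·‖M B M − M‖₂, where ‖·‖₂ denotes the operator norm. -/
open Matrix

/-- Entrywise max-norm statements are phrased pointwise; `opNorm` is the ℓ₂→ℓ₂ operator norm. -/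
noncomputable def opNorm {n : ℕ} (A : Matrix (Fin n) (Fin n) ℝ) : ℝ :=
  ‖Matrix.toEuclideanCLM (𝕜 := ℝ) A‖

/-- If `M` is a symmetric `μ`-incoherent rank-`r` matrix with eigendecomposition
`M = U Σ Uᵀ`, then for any symmetric `B`,
`‖M B M − M‖_∞ ≤ (μ² r / n) ‖M B M − M‖₂`. -/
theorem stmt0 (n r : ℕ) (μ : ℝ) (M B : Matrix (Fin n) (Fin n) ℝ)
    (U : Matrix (Fin n) (Fin r) ℝ) (d : Fin r → ℝ)
    (hM : M.IsSymm) (hB : B.IsSymm)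
    (hU : Uᵀ * U = 1)
    (hdecomp : M = U * Matrix.diagonal d * Uᵀ)
    (hincoh : ∀ i : Fin n,
      Real.sqrt (∑ j, (U i j) ^ 2) ≤ μ * Real.sqrt r / Real.sqrt n) :
    ∀ i j, |(M * B * M - M) i j| ≤ μ ^ 2 * r / n * opNorm (M * B * M - M) := by
  intro i j
  have hPM : U * Uᵀ * M = M := by
    rw [hdecomp, Matrix.mul_assoc U (Matrix.diagonal d) Uᵀ, Matrix.mul_assoc U Uᵀ,
      ← Matrix.mul_assoc Uᵀ U, hU, Matrix.one_mul]
  have hMP : M * (U * Uᵀ) = M := by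
    rw [hdecomp, Matrix.mul_assoc (U * Matrix.diagonal d) Uᵀ,
      ← Matrix.mul_assoc Uᵀ U, hU, Matrix.one_mul]
  have hPP : (U * Uᵀ) * (U * Uᵀ) = U * Uᵀ := by
    rw [Matrix.mul_assoc U Uᵀ, ← Matrix.mul_assoc Uᵀ U, hU, Matrix.one_mul]
  set P : Matrix (Fin n) (Fin n) ℝ := U * Uᵀ with hP
  have hPsymm : ∀ a b, P a b = P b a := by
    intro a b
    simp [hP, Matrix.mul_apply, mul_comm]
  have h1 : P * (M * B * M) = M * B * M := by
    rw [← Matrix.mul_assoc, ← Matrix.mul_assoc, hPM]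
  have h2 : (M * B * M) * P = M * B * M := by
    rw [Matrix.mul_assoc, hMP]
  have hPEP : P * (M * B * M - M) * P = M * B * M - M := by
    rw [Matrix.mul_sub, Matrix.sub_mul, h1, hPM, h2, hMP]
  -- vectors
  set x : EuclideanSpace ℝ (Fin n) := (WithLp.equiv 2 _).symm (fun k => P k i) with hx
  set y : EuclideanSpace ℝ (Fin n) := (WithLp.equiv 2 _).symm (fun k => P k j) with hy
  have hPaa : ∀ a : Fin n, P a a = ∑ k, U a k ^ 2 := by
    intro a
    rw [hP, Matrix.mul_apply]
    exact Finset.sum_congr rfl fun k _ => by rw [Matrix.transpose_apply, sq]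
  have hnormsq : ∀ a : Fin n,
      ‖((WithLp.equiv 2 (Fin n → ℝ)).symm (fun k => P k a) : EuclideanSpace ℝ (Fin n))‖
        = Real.sqrt (∑ k, (U a k) ^ 2) := by
    intro a
    rw [EuclideanSpace.norm_eq]
    congr 1
    have h1 : (∑ k, ‖((WithLp.equiv 2 (Fin n → ℝ)).symm (fun k => P k a) :
        EuclideanSpace ℝ (Fin n)) k‖ ^ 2) = ∑ k, P a k * P k a := by
      refine Finset.sum_congr rfl fun k _ => ?_
      have : ((WithLp.equiv 2 (Fin n → ℝ)).symm (fun k => P k a) :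
          EuclideanSpace ℝ (Fin n)) k = P k a := rfl
      rw [this, Real.norm_eq_abs, sq_abs, sq, hPsymm a k]
    rw [h1, ← Matrix.mul_apply, hPP, hPaa]
  have hxnorm : ‖x‖ ≤ μ * Real.sqrt r / Real.sqrt n := by
    rw [hx, hnormsq i]; exact hincoh i
  have hynorm : ‖y‖ ≤ μ * Real.sqrt r / Real.sqrt n := by
    rw [hy, hnormsq j]; exact hincoh j
  -- entry as inner product
  have hinner : (M * B * M - M) i j = inner ℝ x ((Matrix.toEuclideanCLM (𝕜 := ℝ)
      (M * B * M - M)) y) := by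
    rw [hy]; show _ = inner ℝ x ((WithLp.equiv 2 (Fin n → ℝ)).symm (Matrix.toLin' (M * B * M - M) (fun k => P k j)))
    have : (inner ℝ x ((WithLp.equiv 2 (Fin n → ℝ)).symm
        (Matrix.toLin' (M * B * M - M) (fun k => P k j)) : EuclideanSpace ℝ (Fin n)) : ℝ)
        = ∑ k, P k i * ((M * B * M - M).mulVec (fun l => P l j)) k := by
      rw [PiLp.inner_apply]
      refine Finset.sum_congr rfl fun k _ => ?_
      simp only [Matrix.toLin'_apply, RCLike.inner_apply, conj_trivial]
      exact mul_comm _ _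
    rw [this]
    conv_lhs => rw [← hPEP, Matrix.mul_assoc]
    rw [Matrix.mul_apply]
    refine Finset.sum_congr rfl fun k _ => ?_
    rw [hPsymm i k, Matrix.mul_apply]
    rfl
  have hbound : |(M * B * M - M) i j| ≤ ‖x‖ * (opNorm (M * B * M - M) * ‖y‖) := by
    rw [hinner]
    calc |(inner ℝ x ((Matrix.toEuclideanCLM (𝕜 := ℝ) (M * B * M - M)) y) : ℝ)|
        ≤ ‖x‖ * ‖(Matrix.toEuclideanCLM (𝕜 := ℝ) (M * B * M - M)) y‖ := by
          simpa using abs_real_inner_le_norm x ((Matrix.toEuclideanCLM (𝕜 := ℝ) (M * B * M - M)) y)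
      _ ≤ ‖x‖ * (opNorm (M * B * M - M) * ‖y‖) := by
          apply mul_le_mul_of_nonneg_left _ (norm_nonneg x)
          exact ContinuousLinearMap.le_opNorm _ y
  have hc0 : 0 ≤ μ * Real.sqrt r / Real.sqrt n := le_trans (Real.sqrt_nonneg _) (hincoh i)
  have hop0 : 0 ≤ opNorm (M * B * M - M) := norm_nonneg _
  have hcsq : (μ * Real.sqrt r / Real.sqrt n) * (μ * Real.sqrt r / Real.sqrt n)
      = μ ^ 2 * r / n := by
    have hn : Real.sqrt n * Real.sqrt n = n := Real.mul_self_sqrt (Nat.cast_nonneg n)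
    have hr : Real.sqrt r * Real.sqrt r = r := Real.mul_self_sqrt (Nat.cast_nonneg r)
    have hnpos : (0:ℝ) < n := by exact_mod_cast Nat.pos_of_ne_zero (fun h => by subst h; exact i.elim0)
    have hsn : (0:ℝ) < Real.sqrt n := Real.sqrt_pos.mpr hnpos
    field_simp
    rw [Real.sq_sqrt (Nat.cast_nonneg r), Real.sq_sqrt (Nat.cast_nonneg n)]; ring
  calc |(M * B * M - M) i j| ≤ ‖x‖ * (opNorm (M * B * M - M) * ‖y‖) := hbound
    _ ≤ μ ^ 2 * r / n * opNorm (M * B * M - M) := by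
        nlinarith [norm_nonneg x, norm_nonneg y, hxnorm, hynorm, hc0, hop0, hcsq,
          mul_le_mul hxnorm hynorm (norm_nonneg y) hc0]
end

section
/- Let A ∈ ℝ^{n×n} be a symmetric matrix with eigenvalues β₁,…,βₙ ordered so that |β₁| ≥ ⋯ ≥ |βₙ|, and suppose |β_k| > 0. Let E be a symmetric matrix with ‖E‖₂ < |β_k|/2, and let W = A + E. Let P_k(W) = U Λ Uᵀ be the eigendecomposition of the best rank-k approximation of W (top-k eigenvalues by magnitude). Then Λ is invertible, |λ_k| ≥ |β_k|/2, and ‖A − A U Λ⁻¹ Uᵀ A‖₂ ≤ |β_{k+1}| + 5‖E‖₂. -/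
open Matrix

section helpers
variable {n : ℕ}

noncomputable def ee (x : Fin n → ℝ) : EuclideanSpace ℝ (Fin n) := (WithLp.equiv 2 _).symm x

lemma ee_norm (x : Fin n → ℝ) : ‖ee x‖ = Real.sqrt (∑ i, x i ^ 2) := by
  rw [EuclideanSpace.norm_eq]
  congr 1
  exact Finset.sum_congr rfl fun i _ => by rw [Real.norm_eq_abs, sq_abs]; rfl

lemma clm_apply (M : Matrix (Fin n) (Fin n) ℝ) (x : Fin n → ℝ) :
    (Matrix.toEuclideanCLM (𝕜 := ℝ) M) (ee x) = ee (M *ᵥ x) := by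
  exact Matrix.toEuclideanCLM_toLp M x

lemma ee_add (x y : Fin n → ℝ) : ee (x + y) = ee x + ee y := rfl

lemma mulVec_norm_le (M : Matrix (Fin n) (Fin n) ℝ) (x : Fin n → ℝ) :
    ‖ee (M *ᵥ x)‖ ≤ opNorm M * ‖ee x‖ := by
  rw [← clm_apply]; exact (Matrix.toEuclideanCLM (𝕜 := ℝ) M).le_opNorm _

lemma opNorm_le_of_forall {M : Matrix (Fin n) (Fin n) ℝ} {c : ℝ} (hc : 0 ≤ c)
    (h : ∀ x : Fin n → ℝ, ‖ee (M *ᵥ x)‖ ≤ c * ‖ee x‖) : opNorm M ≤ c := by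
  apply ContinuousLinearMap.opNorm_le_bound _ hc
  intro v
  have := h (WithLp.equiv 2 _ v)
  rwa [← clm_apply] at this

lemma opNorm_nonneg (M : Matrix (Fin n) (Fin n) ℝ) : 0 ≤ opNorm M := norm_nonneg _

lemma opNorm_mul_le (A B : Matrix (Fin n) (Fin n) ℝ) : opNorm (A * B) ≤ opNorm A * opNorm B := by
  unfold opNorm; rw [_root_.map_mul]; exact ContinuousLinearMap.opNorm_comp_le _ _

lemma opNorm_neg (A : Matrix (Fin n) (Fin n) ℝ) : opNorm (-A) = opNorm A := by
  unfold opNorm; rw [map_neg, norm_neg]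

lemma orth_norm {V : Matrix (Fin n) (Fin n) ℝ} (hV : Vᵀ * V = 1) (x : Fin n → ℝ) :
    ‖ee (V *ᵥ x)‖ = ‖ee x‖ := by
  rw [ee_norm, ee_norm]
  congr 1
  have h : (V *ᵥ x) ⬝ᵥ (V *ᵥ x) = x ⬝ᵥ x := by
    rw [Matrix.dotProduct_mulVec, ← Matrix.mulVec_transpose, Matrix.mulVec_mulVec, hV,
      Matrix.one_mulVec]
  simpa [dotProduct, sq] using h

lemma diag_norm_le {d : Fin n → ℝ} {c : ℝ} (hc : 0 ≤ c) (hd : ∀ i, |d i| ≤ c) (x : Fin n → ℝ) :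
    ‖ee (Matrix.diagonal d *ᵥ x)‖ ≤ c * ‖ee x‖ := by
  rw [ee_norm, ee_norm, ← Real.sqrt_sq hc, ← Real.sqrt_mul (sq_nonneg c)]
  apply Real.sqrt_le_sqrt
  rw [Finset.mul_sum]
  apply Finset.sum_le_sum
  intro i _
  rw [Matrix.mulVec_diagonal, mul_pow]
  apply mul_le_mul_of_nonneg_right _ (sq_nonneg _)
  calc d i ^ 2 = |d i| ^ 2 := (sq_abs _).symm
    _ ≤ c ^ 2 := by apply pow_le_pow_left₀ (abs_nonneg _) (hd i)

lemma conj_diag_norm_le {V : Matrix (Fin n) (Fin n) ℝ} (hV : Vᵀ * V = 1) {d : Fin n → ℝ}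
    {c : ℝ} (hc : 0 ≤ c) (hd : ∀ i, |d i| ≤ c) :
    opNorm (V * Matrix.diagonal d * Vᵀ) ≤ c := by
  have hV' : Vᵀᵀ * Vᵀ = 1 := by
    rw [Matrix.transpose_transpose]
    rwa [mul_eq_one_comm] at hV
  apply opNorm_le_of_forall hc
  intro x
  rw [← Matrix.mulVec_mulVec, ← Matrix.mulVec_mulVec, orth_norm hV]
  calc ‖ee (Matrix.diagonal d *ᵥ (Vᵀ *ᵥ x))‖ ≤ c * ‖ee (Vᵀ *ᵥ x)‖ := diag_norm_le hc hd _
    _ = c * ‖ee x‖ := by rw [orth_norm hV']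

/-- Weyl-type perturbation bound for magnitude-sorted eigenvalues. -/
lemma weyl {P V : Matrix (Fin n) (Fin n) ℝ} {β lam : Fin n → ℝ}
    (hP : Pᵀ * P = 1) (hV : Vᵀ * V = 1)
    (hβ : Antitone (fun i => |β i|)) (hlam : Antitone (fun i => |lam i|))
    {E : Matrix (Fin n) (Fin n) ℝ}
    (hE : V * Matrix.diagonal lam * Vᵀ = P * Matrix.diagonal β * Pᵀ + E)
    (m : Fin n) : |lam m| ≤ |β m| + opNorm E := by
  classical
  set B : Matrix (Fin n) (Fin n) ℝ :=
    Matrix.of fun i j => if i < m then Pᵀ i j else if m < i then Vᵀ i j else 0 with hB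
  have hdet : B.det = 0 := by
    apply Matrix.det_eq_zero_of_row_eq_zero m
    intro j
    simp [hB]
  obtain ⟨x, hx0, hxB⟩ := (Matrix.exists_mulVec_eq_zero_iff).mpr hdet
  set c := Pᵀ *ᵥ x with hcdef
  set d := Vᵀ *ᵥ x with hddef
  have hc : ∀ i : Fin n, i < m → c i = 0 := by
    intro i hi
    have : (B *ᵥ x) i = c i := by
      simp only [Matrix.mulVec, hcdef, hB, dotProduct]
      exact Finset.sum_congr rfl fun j _ => by simp [hi]
    rw [← this, hxB]; rfl
  have hd : ∀ i : Fin n, m < i → d i = 0 := by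
    intro i hi
    have : (B *ᵥ x) i = d i := by
      simp only [Matrix.mulVec, hddef, hB, dotProduct]
      exact Finset.sum_congr rfl fun j _ => by
        have : ¬ i < m := not_lt.mpr hi.le
        simp [this, hi]
    rw [← this, hxB]; rfl
  have hV' : Vᵀᵀ * Vᵀ = 1 := by
    rw [Matrix.transpose_transpose]; rwa [mul_eq_one_comm] at hV
  have hP' : Pᵀᵀ * Pᵀ = 1 := by
    rw [Matrix.transpose_transpose]; rwa [mul_eq_one_comm] at hP
  have hWx : (V * Matrix.diagonal lam * Vᵀ) *ᵥ x = V *ᵥ (Matrix.diagonal lam *ᵥ d) := by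
    rw [Matrix.mulVec_mulVec, Matrix.mulVec_mulVec]
  have hAx : (P * Matrix.diagonal β * Pᵀ) *ᵥ x = P *ᵥ (Matrix.diagonal β *ᵥ c) := by
    rw [Matrix.mulVec_mulVec, Matrix.mulVec_mulVec]
  have hxnorm : 0 < ‖ee x‖ := by
    rw [norm_pos_iff]
    intro h
    apply hx0
    have : (WithLp.equiv 2 (Fin n → ℝ)) (ee x) = (WithLp.equiv 2 (Fin n → ℝ)) 0 := by rw [h]
    simpa [ee] using this
  have hdnorm : ‖ee d‖ = ‖ee x‖ := orth_norm hV' x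
  have hlow : |lam m| * ‖ee x‖ ≤ ‖ee ((V * Matrix.diagonal lam * Vᵀ) *ᵥ x)‖ := by
    rw [hWx, orth_norm hV, ← hdnorm, ee_norm, ee_norm]
    rw [← Real.sqrt_sq (abs_nonneg (lam m)), ← Real.sqrt_mul (sq_nonneg _)]
    apply Real.sqrt_le_sqrt
    rw [Finset.mul_sum]
    apply Finset.sum_le_sum
    intro i _
    rw [Matrix.mulVec_diagonal, mul_pow]
    rcases le_or_gt i m with h | h
    · apply mul_le_mul_of_nonneg_right _ (sq_nonneg _)
      calc |lam m| ^ 2 ≤ |lam i| ^ 2 := pow_le_pow_left₀ (abs_nonneg _) (hlam h) 2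
        _ = lam i ^ 2 := sq_abs _
    · rw [hd i h]; simp
  have hup : ‖ee ((P * Matrix.diagonal β * Pᵀ) *ᵥ x)‖ ≤ |β m| * ‖ee x‖ := by
    rw [hAx, orth_norm hP]
    have hcnorm : ‖ee c‖ = ‖ee x‖ := orth_norm hP' x
    rw [← hcnorm, ee_norm, ee_norm]
    rw [← Real.sqrt_sq (abs_nonneg (β m)), ← Real.sqrt_mul (sq_nonneg _)]
    apply Real.sqrt_le_sqrt
    rw [Finset.mul_sum]
    apply Finset.sum_le_sum
    intro i _
    rw [Matrix.mulVec_diagonal, mul_pow]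
    rcases lt_or_ge i m with h | h
    · rw [hc i h]; simp
    · apply mul_le_mul_of_nonneg_right _ (sq_nonneg _)
      calc β i ^ 2 = |β i| ^ 2 := (sq_abs _).symm
        _ ≤ |β m| ^ 2 := pow_le_pow_left₀ (abs_nonneg _) (hβ h) 2
  have htri : ‖ee ((V * Matrix.diagonal lam * Vᵀ) *ᵥ x)‖ ≤
      ‖ee ((P * Matrix.diagonal β * Pᵀ) *ᵥ x)‖ + ‖ee (E *ᵥ x)‖ := by
    rw [hE, Matrix.add_mulVec, ee_add]
    exact norm_add_le _ _
  have hEx : ‖ee (E *ᵥ x)‖ ≤ opNorm E * ‖ee x‖ := mulVec_norm_le E x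
  have : |lam m| * ‖ee x‖ ≤ (|β m| + opNorm E) * ‖ee x‖ := by
    calc |lam m| * ‖ee x‖ ≤ _ := hlow
      _ ≤ _ + _ := htri
      _ ≤ |β m| * ‖ee x‖ + opNorm E * ‖ee x‖ := add_le_add hup hEx
      _ = (|β m| + opNorm E) * ‖ee x‖ := by ring
  exact le_of_mul_le_mul_right this hxnorm

end helpers

section jsec
variable {n k : ℕ}

noncomputable def Jm (hkn : k < n) : Matrix (Fin n) (Fin k) ℝ :=
  Matrix.of fun i j => if i = Fin.castLE hkn.le j then 1 else 0

lemma Jm_tJ (hkn : k < n) : (Jm hkn)ᵀ * (Jm hkn) = 1 := by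
  ext j j'
  simp only [Matrix.mul_apply, Matrix.transpose_apply, Jm, Matrix.of_apply, Matrix.one_apply,
    ite_mul, one_mul, zero_mul]
  rw [Finset.sum_ite_eq' Finset.univ (Fin.castLE hkn.le j)]
  simp only [Finset.mem_univ, if_true]
  by_cases h : j = j'
  · subst h; simp
  · rw [if_neg, if_neg h]
    intro hc
    exact h (Fin.castLE_injective hkn.le hc)

lemma diag_mul_Jm (hkn : k < n) (lam : Fin n → ℝ) :
    Matrix.diagonal lam * Jm hkn =
      Jm hkn * Matrix.diagonal (fun j => lam (Fin.castLE hkn.le j)) := by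
  ext i j
  rw [Matrix.diagonal_mul, Matrix.mul_diagonal]
  simp only [Jm, Matrix.of_apply]
  by_cases h : i = Fin.castLE hkn.le j
  · subst h; simp
  · simp [h]

lemma Jm_diag_Jm (hkn : k < n) (g : Fin k → ℝ) :
    Jm hkn * Matrix.diagonal g * (Jm hkn)ᵀ =
      Matrix.diagonal (fun i : Fin n => if h : (i : ℕ) < k then g ⟨i, h⟩ else 0) := by
  have hJd : Jm hkn * Matrix.diagonal g =
      Matrix.of fun i (j : Fin k) => if i = Fin.castLE hkn.le j then g j else 0 := by
    ext i j
    rw [Matrix.mul_diagonal]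
    simp only [Jm, Matrix.of_apply, ite_mul, one_mul, zero_mul]
  rw [hJd]
  ext i i'
  simp only [Matrix.mul_apply, Matrix.transpose_apply, Jm, Matrix.of_apply, mul_ite, mul_one,
    mul_zero, ite_mul, zero_mul, Matrix.diagonal_apply]
  by_cases h : (i : ℕ) < k
  · have key : ∀ j : Fin k, (i = Fin.castLE hkn.le j) ↔ (j = ⟨i, h⟩) := by
      intro j
      constructor
      · intro hh; exact Fin.ext (congrArg Fin.val hh).symm
      · intro hh; subst hh; rfl
    simp only [key]
    rw [Finset.sum_eq_single (⟨i, h⟩ : Fin k)]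
    · have hcast : Fin.castLE hkn.le (⟨i, h⟩ : Fin k) = i := rfl
      rw [if_pos rfl, hcast, dif_pos h]
      by_cases hii : i = i'
      · subst hii; simp
      · rw [if_neg (fun hc => hii hc.symm), if_neg hii]
    · intro b _ hb
      simp [hb]
    · intro hb; exact absurd (Finset.mem_univ _) hb
  · have key : ∀ j : Fin k, ¬ (i = Fin.castLE hkn.le j) := by
      intro j hc
      exact h (hc ▸ j.isLt)
    simp only [key, if_false, Finset.sum_const_zero, dif_neg h, ite_self]
end jsec

/-- Let `A` be symmetric with eigenvalues `β` sorted by decreasing magnitude and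
`|β_k| > 0`. Let `E` be symmetric with `‖E‖₂ < |β_k|/2` and `W = A + E`, with
eigendecomposition `W = V diag(lam) Vᵀ`, `lam` sorted by decreasing magnitude, so
that `P_k(W) = U Λ Uᵀ` where `U` is the first `k` columns of `V` and
`Λ = diag(lam₁,…,lam_k)`. Then `Λ` is invertible, `|λ_k| ≥ |β_k|/2`, and
`‖A − A U Λ⁻¹ Uᵀ A‖₂ ≤ |β_{k+1}| + 5‖E‖₂`. -/
theorem stmt3 (n k : ℕ) (hk1 : 1 ≤ k) (hkn : k < n)
    (A E : Matrix (Fin n) (Fin n) ℝ) (hAsymm : A.IsSymm) (hEsymm : E.IsSymm)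
    (P V : Matrix (Fin n) (Fin n) ℝ) (β lam : Fin n → ℝ)
    (hP : Pᵀ * P = 1) (hAdecomp : A = P * Matrix.diagonal β * Pᵀ)
    (hβsorted : Antitone (fun i => |β i|))
    (hV : Vᵀ * V = 1) (hWdecomp : A + E = V * Matrix.diagonal lam * Vᵀ)
    (hlamsorted : Antitone (fun i => |lam i|))
    (hβk : 0 < |β ⟨k - 1, by omega⟩|)
    (hEnorm : opNorm E < |β ⟨k - 1, by omega⟩| / 2)
    (U : Matrix (Fin n) (Fin k) ℝ)
    (hU : U = Matrix.of fun i (j : Fin k) => V i (Fin.castLE hkn.le j)) :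
    (∀ j : Fin k, lam (Fin.castLE hkn.le j) ≠ 0) ∧
    |β ⟨k - 1, by omega⟩| / 2 ≤ |lam ⟨k - 1, by omega⟩| ∧
    opNorm (A - A * U *
        Matrix.diagonal (fun j : Fin k => (lam (Fin.castLE hkn.le j))⁻¹) * Uᵀ * A)
      ≤ |β ⟨k, hkn⟩| + 5 * opNorm E := by
  have hkn' : k - 1 < n := by omega
  set m1 : Fin n := ⟨k - 1, hkn'⟩ with hm1
  -- Weyl bounds
  have hWE : V * Matrix.diagonal lam * Vᵀ = P * Matrix.diagonal β * Pᵀ + E := by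
    rw [← hWdecomp, hAdecomp]
  have hweyl1 : ∀ m : Fin n, |lam m| ≤ |β m| + opNorm E := fun m =>
    weyl hP hV hβsorted hlamsorted hWE m
  have hweyl2 : ∀ m : Fin n, |β m| ≤ |lam m| + opNorm E := by
    intro m
    have hE' : P * Matrix.diagonal β * Pᵀ = V * Matrix.diagonal lam * Vᵀ + (-E) := by
      rw [hWE, add_neg_cancel_right]
    have := weyl hV hP hlamsorted hβsorted hE' m
    rwa [opNorm_neg] at this
  have hEnn : 0 ≤ opNorm E := opNorm_nonneg E
  -- lower bound on |lam m1|
  have hlam_m1 : |β m1| / 2 ≤ |lam m1| := by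
    have := hweyl2 m1
    have : |β m1| - opNorm E ≤ |lam m1| := by linarith
    linarith [hEnorm]
  have hlam_m1_pos : 0 < |lam m1| := lt_of_lt_of_le (by linarith [hβk]) hlam_m1
  -- all the first k eigenvalues are nonzero
  have hlam_le : ∀ j : Fin k, |lam m1| ≤ |lam (Fin.castLE hkn.le j)| := by
    intro j
    apply hlamsorted
    show (Fin.castLE hkn.le j) ≤ m1
    exact Fin.mk_le_mk.mpr (by omega)
  have hne : ∀ j : Fin k, lam (Fin.castLE hkn.le j) ≠ 0 := by
    intro j hz
    have := hlam_le j
    rw [hz, abs_zero] at this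
    linarith
  refine ⟨hne, hlam_m1, ?_⟩
  -- Matrix algebra
  have hUJ : U = V * Jm hkn := by
    rw [hU]
    ext i j
    rw [Matrix.mul_apply]
    simp only [Jm, Matrix.of_apply, mul_ite, mul_one, mul_zero]
    rw [Finset.sum_ite_eq' Finset.univ (Fin.castLE hkn.le j)]
    simp
  set W := V * Matrix.diagonal lam * Vᵀ with hW
  have hVV' : V * Vᵀ = 1 := by rwa [mul_eq_one_comm] at hV
  set Λ : Matrix (Fin k) (Fin k) ℝ :=
    Matrix.diagonal (fun j => lam (Fin.castLE hkn.le j)) with hΛ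
  set Λi : Matrix (Fin k) (Fin k) ℝ :=
    Matrix.diagonal (fun j : Fin k => (lam (Fin.castLE hkn.le j))⁻¹) with hΛi
  have hΛΛi : Λ * Λi = 1 := by
    rw [hΛ, hΛi, Matrix.diagonal_mul_diagonal]
    have : (fun i : Fin k => lam (Fin.castLE hkn.le i) * (lam (Fin.castLE hkn.le i))⁻¹) =
        fun _ => (1:ℝ) := funext fun j => mul_inv_cancel₀ (hne j)
    rw [this, Matrix.diagonal_one]
  have hΛiΛ : Λi * Λ = 1 := by
    rw [hΛi, hΛ, Matrix.diagonal_mul_diagonal]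
    have : (fun i : Fin k => (lam (Fin.castLE hkn.le i))⁻¹ * lam (Fin.castLE hkn.le i)) =
        fun _ => (1:ℝ) := funext fun j => inv_mul_cancel₀ (hne j)
    rw [this, Matrix.diagonal_one]
  have hWU : W * U = U * Λ := by
    rw [hUJ, hW]
    calc V * Matrix.diagonal lam * Vᵀ * (V * Jm hkn)
        = V * Matrix.diagonal lam * (Vᵀ * V) * Jm hkn := by
          simp only [Matrix.mul_assoc]
      _ = V * (Matrix.diagonal lam * Jm hkn) := by rw [hV, Matrix.mul_one, Matrix.mul_assoc]
      _ = V * (Jm hkn * Λ) := by rw [diag_mul_Jm]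
      _ = V * Jm hkn * Λ := by rw [Matrix.mul_assoc]
  have hWsymm : Wᵀ = W := by
    rw [hW]
    rw [Matrix.transpose_mul, Matrix.transpose_mul, Matrix.transpose_transpose,
      Matrix.diagonal_transpose, Matrix.mul_assoc]
  have hUW : Uᵀ * W = Λ * Uᵀ := by
    calc Uᵀ * W = Uᵀ * Wᵀ := by rw [hWsymm]
      _ = (W * U)ᵀ := (Matrix.transpose_mul W U).symm
      _ = (U * Λ)ᵀ := by rw [hWU]
      _ = Λᵀ * Uᵀ := Matrix.transpose_mul U Λ
      _ = Λ * Uᵀ := by rw [hΛ, Matrix.diagonal_transpose]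
  set Q := U * Λi * Uᵀ with hQ
  have hWQ : W * Q = U * Uᵀ := by
    rw [hQ, ← Matrix.mul_assoc, ← Matrix.mul_assoc, hWU, Matrix.mul_assoc U Λ Λi, hΛΛi,
      Matrix.mul_one]
  have hQW : Q * W = U * Uᵀ := by
    rw [hQ, Matrix.mul_assoc, hUW, ← Matrix.mul_assoc, Matrix.mul_assoc U Λi Λ, hΛiΛ,
      Matrix.mul_one]
  have hWQW : W * Q * W = U * Λ * Uᵀ := by
    rw [hWQ, Matrix.mul_assoc, hUW, ← Matrix.mul_assoc]
  have hAW : A = W - E := eq_sub_of_add_eq hWdecomp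
  -- key decomposition
  have hkey : A - A * U * Λi * Uᵀ * A =
      (W - U * Λ * Uᵀ) - E + E * (U * Uᵀ) + (U * Uᵀ) * E - E * Q * E := by
    have h1 : A * U * Λi * Uᵀ * A = A * Q * A := by
      simp only [hQ, Matrix.mul_assoc]
    rw [h1, hAW]
    have h2 : (W - E) * Q * (W - E) =
        W * Q * W - W * Q * E - E * (Q * W) + E * Q * E := by noncomm_ring
    rw [h2, hWQW, hWQ, hQW]
    noncomm_ring
  rw [hkey]
  -- conjugated-diagonal representations
  have hconj : ∀ g : Fin k → ℝ, U * Matrix.diagonal g * Uᵀ =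
      V * Matrix.diagonal (fun i : Fin n => if h : (i : ℕ) < k then g ⟨i, h⟩ else 0) * Vᵀ := by
    intro g
    rw [hUJ, Matrix.transpose_mul, ← Jm_diag_Jm hkn g]
    simp only [Matrix.mul_assoc]
  have hUUt : U * Uᵀ = V * Matrix.diagonal
      (fun i : Fin n => if _ : (i : ℕ) < k then (1:ℝ) else 0) * Vᵀ := by
    have := hconj (fun _ => (1:ℝ))
    rwa [Matrix.diagonal_one, Matrix.mul_one] at this
  -- norm bounds
  have bUU : opNorm (U * Uᵀ) ≤ 1 := by
    rw [hUUt]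
    apply conj_diag_norm_le hV zero_le_one
    intro i
    by_cases h : (i : ℕ) < k <;> simp [h]
  have bQ : opNorm Q ≤ |lam m1|⁻¹ := by
    rw [hQ, hΛi, hconj]
    apply conj_diag_norm_le hV (by positivity)
    intro i
    by_cases h : (i : ℕ) < k
    · rw [dif_pos h, abs_inv]
      exact inv_anti₀ hlam_m1_pos (hlam_le ⟨i, h⟩)
    · rw [dif_neg h, abs_zero]; positivity
  have bW1 : opNorm (W - U * Λ * Uᵀ) ≤ |lam ⟨k, hkn⟩| := by
    have hrep : W - U * Λ * Uᵀ = V * Matrix.diagonal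
        (fun i : Fin n => if (i : ℕ) < k then 0 else lam i) * Vᵀ := by
      rw [hΛ, hconj, hW]
      rw [← Matrix.sub_mul, ← Matrix.mul_sub V]
      congr 2
      ext i i'
      rcases eq_or_ne i i' with rfl | hii
      · simp only [Matrix.sub_apply, Matrix.diagonal_apply_eq]
        by_cases h : (i : ℕ) < k
        · rw [dif_pos h, if_pos h]
          have : Fin.castLE hkn.le (⟨i, h⟩ : Fin k) = i := rfl
          rw [this, sub_self]
        · rw [dif_neg h, if_neg h, sub_zero]
      · simp [Matrix.diagonal_apply_ne _ hii]
    rw [hrep]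
    apply conj_diag_norm_le hV (abs_nonneg _)
    intro i
    by_cases h : (i : ℕ) < k
    · rw [if_pos h, abs_zero]; exact abs_nonneg _
    · rw [if_neg h]
      apply hlamsorted
      show (⟨k, hkn⟩ : Fin n) ≤ i
      exact Fin.mk_le_mk.mpr (by omega)
  have bW : opNorm (W - U * Λ * Uᵀ) ≤ |β ⟨k, hkn⟩| + opNorm E :=
    le_trans bW1 (hweyl1 ⟨k, hkn⟩)
  have bEU : opNorm (E * (U * Uᵀ)) ≤ opNorm E := by
    calc opNorm (E * (U * Uᵀ)) ≤ opNorm E * opNorm (U * Uᵀ) := opNorm_mul_le _ _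
      _ ≤ opNorm E * 1 := mul_le_mul_of_nonneg_left bUU hEnn
      _ = opNorm E := mul_one _
  have bUE : opNorm ((U * Uᵀ) * E) ≤ opNorm E := by
    calc opNorm ((U * Uᵀ) * E) ≤ opNorm (U * Uᵀ) * opNorm E := opNorm_mul_le _ _
      _ ≤ 1 * opNorm E := mul_le_mul_of_nonneg_right bUU hEnn
      _ = opNorm E := one_mul _
  have hElam : opNorm E ≤ |lam m1| := by
    calc opNorm E ≤ |β m1| / 2 := le_of_lt hEnorm
      _ ≤ |lam m1| := hlam_m1
  have bEQE : opNorm (E * Q * E) ≤ opNorm E := by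
    calc opNorm (E * Q * E) ≤ opNorm (E * Q) * opNorm E := opNorm_mul_le _ _
      _ ≤ (opNorm E * opNorm Q) * opNorm E :=
          mul_le_mul_of_nonneg_right (opNorm_mul_le _ _) hEnn
      _ ≤ (|lam m1| * |lam m1|⁻¹) * opNorm E := by
          apply mul_le_mul_of_nonneg_right _ hEnn
          exact mul_le_mul hElam bQ (opNorm_nonneg Q) (abs_nonneg _)
      _ = 1 * opNorm E := by rw [mul_inv_cancel₀ (ne_of_gt hlam_m1_pos)]
      _ = opNorm E := one_mul _
  -- triangle inequality assembly
  have tri : opNorm ((W - U * Λ * Uᵀ) - E + E * (U * Uᵀ) + (U * Uᵀ) * E - E * Q * E) ≤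
      opNorm (W - U * Λ * Uᵀ) + opNorm E + opNorm (E * (U * Uᵀ)) + opNorm ((U * Uᵀ) * E) +
        opNorm (E * Q * E) := by
    unfold opNorm
    simp only [map_sub, map_add]
    calc ‖_ - _ + _ + _ - _‖ ≤ ‖_ - _ + _ + _‖ + ‖_‖ := norm_sub_le _ _
      _ ≤ (‖_ - _ + _‖ + ‖_‖) + ‖_‖ := by gcongr; exact norm_add_le _ _
      _ ≤ ((‖_ - _‖ + ‖_‖) + ‖_‖) + ‖_‖ := by gcongr; exact norm_add_le _ _
      _ ≤ (((‖_‖ + ‖_‖) + ‖_‖) + ‖_‖) + ‖_‖ := by gcongr <;> exact norm_sub_le _ _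
  calc opNorm ((W - U * Λ * Uᵀ) - E + E * (U * Uᵀ) + (U * Uᵀ) * E - E * Q * E) ≤ _ := tri
    _ ≤ (|β ⟨k, hkn⟩| + opNorm E) + opNorm E + opNorm E + opNorm E + opNorm E := by
        gcongr
    _ = |β ⟨k, hkn⟩| + 5 * opNorm E := by ring
end

section
/- Let A be a symmetric n×n real matrix and let Ω ⊆ [n]×[n] be obtained by including each pair (i,j) independently with probability p ∈ [1/(4n), 1/2]. Define B := (√p / (2√n·‖A‖_∞))·(A − (1/p)·P_Ω(A)), where P_Ω(A) zeroes out entries outside Ω. Then each entry B_{ij} satisfies: E[B_{ij}] = 0, |B_{ij}| < 1 almost surely, and E[|B_{ij}|^k] ≤ 1/n for every integer 2 ≤ k ≤ 2 log n. -/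
open Matrix MeasureTheory ProbabilityTheory

open Classical in
lemma integral_ite_mem {Ω : Type*} [MeasurableSpace Ω] (μ : Measure Ω) [IsProbabilityMeasure μ]
    (S : Set Ω) (hS : MeasurableSet S) (c1 c2 : ℝ) :
    ∫ ω, (if ω ∈ S then c1 else c2) ∂μ
      = (μ S).toReal * c1 + (1 - (μ S).toReal) * c2 := by
  have h1 : (fun ω => if ω ∈ S then c1 else c2)
      = fun ω => S.indicator (fun _ => c1 - c2) ω + c2 := by
    funext ω
    by_cases h : ω ∈ S <;> simp [Set.indicator_apply, h]
  rw [h1, integral_add ((integrable_const _).indicator hS) (integrable_const _),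
    integral_indicator_const _ hS, integral_const]
  simp [smul_eq_mul]
  change (μ S).toReal * (c1 - c2) + c2 = _
  ring

lemma aux_ge_one (r : ℝ) (h0 : 0 < r) (h2 : 1 ≤ r * r) : 1 ≤ r := by
  nlinarith

lemma aux_half (x : ℝ) (h0 : 0 < x) (h : 1/4 ≤ x * x) : 1/2 ≤ x := by
  nlinarith

lemma aux_lt1 (q r Amax x : ℝ) (hq0 : 0 < q) (hr1 : 1 ≤ r) (hA : 0 < Amax)
    (hx0 : 0 ≤ x) (hxA : x ≤ Amax) (hq1 : q * q ≤ 1/2) (hqr : 1/2 ≤ r * q) :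
    q * x * (1 - q*q) < 2 * r * Amax * (q*q) := by
  nlinarith [mul_nonneg (mul_nonneg (sub_nonneg.2 hxA) hq0.le)
      (by nlinarith : (0:ℝ) ≤ 1 - q*q),
    mul_pos (mul_pos hA hq0) (mul_pos hq0 hq0),
    mul_nonneg (by nlinarith : (0:ℝ) ≤ 2*r*q - 1) (mul_pos hA hq0).le]

lemma aux_lt2 (q r Amax x : ℝ) (hq0 : 0 < q) (hr1 : 1 ≤ r) (hA : 0 < Amax)
    (hx0 : 0 ≤ x) (hxA : x ≤ Amax) (hq1 : q * q ≤ 1/2) :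
    q * x < 2 * r * Amax := by
  nlinarith [mul_nonneg (sub_nonneg.2 hxA) hq0.le,
    mul_pos hA (by nlinarith : (0:ℝ) < 1 - q),
    mul_nonneg (by linarith : (0:ℝ) ≤ 2*r - 1) hA.le]

lemma aux_mom (q r Amax a : ℝ) (hq0 : 0 < q) (hr0 : 0 < r) (hA : 0 < Amax)
    (ha2 : a * a ≤ Amax * Amax) (hq1 : q * q ≤ 1/2) :
    a * a * (1 - q*q) * (r*r) ≤ 1 * (4 * (r*r) * (Amax*Amax)) := by
  nlinarith [mul_nonneg (mul_nonneg (sub_nonneg.2 ha2)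
      (by nlinarith : (0:ℝ) ≤ 1 - q*q)) (mul_pos hr0 hr0).le,
    mul_nonneg (mul_nonneg (mul_self_nonneg a) (by nlinarith : (0:ℝ) ≤ q*q))
      (mul_pos hr0 hr0).le,
    mul_nonneg (mul_pos (mul_pos hA hA) (mul_pos hr0 hr0)).le
      (by norm_num : (0:ℝ) ≤ 3)]

/-- Rescaled sampling error matrix has centered entries, entries bounded by 1, and
moments `E|B_{ij}|^k ≤ 1/n` for `2 ≤ k ≤ 2 log n`. -/
theorem stmt6 (n : ℕ) (hn : 0 < n) (A : Matrix (Fin n) (Fin n) ℝ) (hA : A.IsSymm)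
    (Amax : ℝ) (hAmax : Amax = ⨆ i, ⨆ j, |A i j|) (hApos : 0 < Amax)
    (p : ℝ) (hp1 : 1 / (4 * n) ≤ p) (hp2 : p ≤ 1 / 2)
    (Ω : Type*) [MeasurableSpace Ω] (μ : Measure Ω) [IsProbabilityMeasure μ]
    (χ : Fin n × Fin n → Ω → Bool)
    (hmeas : ∀ q, Measurable (χ q))
    (hindep : iIndepFun χ μ)
    (hbern : ∀ q, μ (χ q ⁻¹' {true}) = ENNReal.ofReal p)
    (B : Fin n → Fin n → Ω → ℝ)
    (hB : ∀ i j ω, B i j ω = Real.sqrt p / (2 * Real.sqrt n * Amax) *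
      (A i j - (1 / p) * (if χ (i, j) ω then A i j else 0))) :
    ∀ i j : Fin n,
      (∫ ω, B i j ω ∂μ) = 0 ∧
      (∀ᵐ ω ∂μ, |B i j ω| < 1) ∧
      (∀ k : ℕ, 2 ≤ k → (k : ℝ) ≤ 2 * Real.log n →
        (∫ ω, |B i j ω| ^ k ∂μ) ≤ 1 / n) := by
  classical
  have hn1 : (1:ℝ) ≤ (n:ℝ) := by exact_mod_cast hn
  have hnpos : (0:ℝ) < (n:ℝ) := by linarith
  have hp0 : 0 < p := lt_of_lt_of_le (by positivity) hp1
  set q := Real.sqrt p with hqdef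
  set r := Real.sqrt n with hrdef
  have hq2 : q * q = p := Real.mul_self_sqrt hp0.le
  have hr2 : r * r = (n:ℝ) := Real.mul_self_sqrt hnpos.le
  have hq0 : 0 < q := Real.sqrt_pos.2 hp0
  have hr0 : 0 < r := Real.sqrt_pos.2 hnpos
  have hr1 : 1 ≤ r := aux_ge_one r hr0 (by rw [hr2]; exact hn1)
  have hq1 : q * q ≤ 1/2 := by rw [hq2]; exact hp2
  have hnp : (1:ℝ)/4 ≤ (n:ℝ) * p := by
    calc (1:ℝ)/4 = (n:ℝ) * (1/(4*(n:ℝ))) := by field_simp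
      _ ≤ (n:ℝ) * p := mul_le_mul_of_nonneg_left hp1 hnpos.le
  have hqr : 1/2 ≤ r * q := by
    refine aux_half _ (mul_pos hr0 hq0) ?_
    calc (1:ℝ)/4 ≤ (n:ℝ) * p := hnp
      _ = (r*q)*(r*q) := by rw [← hq2, ← hr2]; ring
  intro i j
  have haA : |A i j| ≤ Amax := by
    rw [hAmax]
    calc |A i j| ≤ ⨆ j', |A i j'| :=
          le_ciSup (f := fun j' => |A i j'|)
            (Set.Finite.bddAbove (Set.finite_range _)) j
      _ ≤ ⨆ i', ⨆ j', |A i' j'| :=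
          le_ciSup (f := fun i' => ⨆ j', |A i' j'|)
            (Set.Finite.bddAbove (Set.finite_range _)) i
  set a := A i j with hadef
  have ha2 : a * a ≤ Amax * Amax := by
    rw [← abs_mul_abs_self a]
    exact mul_self_le_mul_self (abs_nonneg a) haA
  set c : ℝ := q / (2 * r * Amax) with hc
  have hcpos : 0 < c := by positivity
  set v1 : ℝ := c * (a - (1/p) * a) with hv1
  set v2 : ℝ := c * a with hv2
  set S := χ (i, j) ⁻¹' {true} with hSdef
  have hS : MeasurableSet S := hmeas (i, j) (measurableSet_singleton true)
  have hμS : (μ S).toReal = p := by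
    rw [hSdef, hbern (i, j)]; exact ENNReal.toReal_ofReal hp0.le
  have hBeq : ∀ ω, B i j ω = if ω ∈ S then v1 else v2 := by
    intro ω
    rw [hB]
    by_cases h : χ (i, j) ω = true
    · simp [hSdef, h, hv1, hadef]
    · simp [hSdef, h, hv2, hadef]
  -- bounds on |v1|, |v2|
  have habs1 : |v1| = c * |a| * (1/p - 1) := by
    have h2p : (2:ℝ) ≤ 1/p := by
      rw [le_div_iff₀ hp0]; linarith
    have hv1' : v1 = c * (a * (1 - 1/p)) := by rw [hv1]; ring
    rw [hv1', abs_mul, abs_mul, abs_of_pos hcpos,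
      abs_of_nonpos (by linarith : 1 - 1/p ≤ 0)]
    ring
  have habs2 : |v2| = c * |a| := by
    rw [hv2, abs_mul, abs_of_pos hcpos]
  have hv1lt : |v1| < 1 := by
    rw [habs1, hc, ← hq2]
    have heq : q / (2 * r * Amax) * |a| * (1/(q*q) - 1)
        = (q * |a| * (1 - q*q)) / ((2 * r * Amax) * (q*q)) := by
      field_simp
    rw [heq, div_lt_one (by positivity)]
    exact aux_lt1 q r Amax |a| hq0 hr1 hApos (abs_nonneg a) haA hq1 hqr
  have hv2lt : |v2| < 1 := by
    rw [habs2, hc]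
    rw [div_mul_eq_mul_div, div_lt_one (by positivity)]
    exact aux_lt2 q r Amax |a| hq0 hr1 hApos (abs_nonneg a) haA hq1
  refine ⟨?_, ?_, ?_⟩
  · -- mean zero
    simp only [hBeq]
    rw [integral_ite_mem μ S hS v1 v2, hμS, hv1, hv2]
    field_simp
    ring
  · exact Filter.Eventually.of_forall fun ω => by rw [hBeq]; split_ifs <;> assumption
  · intro k hk2 _
    have hBk : ∀ ω, |B i j ω| ^ k = if ω ∈ S then |v1| ^ k else |v2| ^ k := by
      intro ω; rw [hBeq]; split_ifs <;> rfl
    simp only [hBk]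
    rw [integral_ite_mem μ S hS _ _, hμS]
    have hm1 : |v1| ^ k ≤ |v1| ^ 2 :=
      pow_le_pow_of_le_one (abs_nonneg _) hv1lt.le hk2
    have hm2 : |v2| ^ k ≤ |v2| ^ 2 :=
      pow_le_pow_of_le_one (abs_nonneg _) hv2lt.le hk2
    have key : p * |v1| ^ 2 + (1 - p) * |v2| ^ 2 ≤ 1 / (n:ℝ) := by
      have e1 : |v1| ^ 2 = v1 ^ 2 := sq_abs v1
      have e2 : |v2| ^ 2 = v2 ^ 2 := sq_abs v2
      rw [e1, e2, hv1, hv2, hc, ← hq2, ← hr2]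
      have heq : (q*q) * (q / (2 * r * Amax) * (a - 1/(q*q) * a)) ^ 2
          + (1 - q*q) * (q / (2 * r * Amax) * a) ^ 2
          = (a * a * (1 - q*q)) / (4 * (r*r) * (Amax*Amax)) := by
        field_simp
        ring
      rw [heq, div_le_div_iff₀ (by positivity) (by positivity)]
      exact aux_mom q r Amax a hq0 hr0 hApos ha2 hq1
    calc p * |v1| ^ k + (1 - p) * |v2| ^ k
        ≤ p * |v1| ^ 2 + (1 - p) * |v2| ^ 2 :=
          add_le_add (mul_le_mul_of_nonneg_left hm1 hp0.le)
            (mul_le_mul_of_nonneg_left hm2 (by linarith))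
      _ ≤ 1 / (n:ℝ) := key
end

section
/- Let Ĥ be a random symmetric n×n matrix satisfying: entries are independent (up to symmetry), E[ĥᵢⱼ]=0, |ĥᵢⱼ|<1, and E[|ĥᵢⱼ|^k] ≤ 1/n for 2 ≤ k ≤ 2 log n. Fix an integer 1 ≤ a ≤ log n, a fixed vector u ∈ ℝⁿ, and a constant c > 4. Then with probability at least 1 − n^{1 − 2 log(c/4)}, for every standard basis vector e_r (r ∈ [n]): |⟨e_r, Ĥᵃ u⟩| ≤ (c log n)ᵃ · ‖u‖_∞. -/
open Matrix MeasureTheory ProbabilityTheory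


open Finset Real

lemma stmt9_expand {n : ℕ} (M : Matrix (Fin n) (Fin n) ℝ) (u : Fin n → ℝ) :
    ∀ (a : ℕ) (r : Fin n), (M ^ a).mulVec u r =
      ∑ p : Fin a → Fin n,
        (∏ i : Fin a, M (Fin.cons (α := fun _ => Fin n) r p i.castSucc) (p i)) * u (Fin.cons (α := fun _ => Fin n) r p (Fin.last a)) := by
  intro a
  induction a with
  | zero =>
    intro r
    simp [Matrix.mulVec_one]
  | succ a ih =>
    intro r
    have key := Equiv.sum_comp (Fin.consEquiv (fun _ : Fin (a+1) => Fin n))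
      (fun p : Fin (a+1) → Fin n =>
        (∏ i : Fin (a+1), M (Fin.cons (α := fun _ => Fin n) r p i.castSucc) (p i)) * u (Fin.cons (α := fun _ => Fin n) r p (Fin.last (a+1))))
    rw [pow_succ', ← Matrix.mulVec_mulVec]
    rw [show (M.mulVec ((M ^ a).mulVec u)) r = ∑ j : Fin n, M r j * ((M ^ a).mulVec u) j by
      simp [Matrix.mulVec, dotProduct]]
    rw [← key, Fintype.sum_prod_type]
    refine Finset.sum_congr rfl fun j _ => ?_
    rw [ih j, Finset.mul_sum]
    refine Finset.sum_congr rfl fun p _ => ?_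
    have hcons : (Fin.consEquiv (fun _ : Fin (a+1) => Fin n)) (j, p) = Fin.cons j p := rfl
    simp only [hcons]
    have h0 : ∏ i : Fin (a+1), M (Fin.cons (α := fun _ => Fin n) r (Fin.cons (α := fun _ => Fin n) j p) i.castSucc) ((Fin.cons (α := fun _ => Fin n) j p) i)
        = M r j * ∏ i : Fin a, M (Fin.cons (α := fun _ => Fin n) j p i.castSucc) (p i) := by
      rw [Fin.prod_univ_succ]
      have e1 : M (Fin.cons (α := fun _ => Fin n) r (Fin.cons (α := fun _ => Fin n) j p) ((0 : Fin (a+1)).castSucc)) ((Fin.cons (α := fun _ => Fin n) j p) 0) = M r j := by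
        simp
      rw [e1]
      congr 1
    rw [h0]
    have h1 : Fin.cons (α := fun _ => Fin n) r (Fin.cons (α := fun _ => Fin n) j p) (Fin.last (a+1)) = Fin.cons (α := fun _ => Fin n) j p (Fin.last a) := by
      rw [← Fin.succ_last, Fin.cons_succ]
    rw [h1]
    ring

lemma stmt9_int_of_bdd {Ω : Type*} [MeasurableSpace Ω] {μ : Measure Ω} [IsProbabilityMeasure μ]
    {f : Ω → ℝ} (hm : Measurable f) (hb : ∀ᵐ ω ∂μ, |f ω| ≤ 1) : Integrable f μ := by
  refine Integrable.mono' (integrable_const 1) hm.aestronglyMeasurable ?_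
  filter_upwards [hb] with ω h using h

lemma stmt9_prod_bdd {ι Ω : Type*} [MeasurableSpace Ω] {μ : Measure Ω}
    (f : ι → Ω → ℝ) (s : Finset ι) (hb : ∀ i, ∀ᵐ ω ∂μ, |f i ω| ≤ 1) :
    ∀ᵐ ω ∂μ, |∏ i ∈ s, f i ω| ≤ 1 := by
  have : ∀ᵐ ω ∂μ, ∀ i ∈ s, |f i ω| ≤ 1 :=
    (ae_ball_iff s.countable_toSet).2 fun i _ => hb i
  filter_upwards [this] with ω h
  rw [abs_prod]
  exact Finset.prod_le_one (fun i _ => abs_nonneg _) fun i hi => h i hi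

lemma stmt9_indep_integral {ι Ω : Type*} [MeasurableSpace Ω] {μ : Measure Ω}
    [IsProbabilityMeasure μ]
    (f : ι → Ω → ℝ) (hind : iIndepFun f μ)
    (hm : ∀ i, Measurable (f i)) (hb : ∀ i, ∀ᵐ ω ∂μ, |f i ω| ≤ 1) (s : Finset ι) :
    ∫ ω, ∏ i ∈ s, f i ω ∂μ = ∏ i ∈ s, ∫ ω, f i ω ∂μ := by
  classical
  induction s using Finset.induction_on with
  | empty => simp
  | insert i s his ih =>
    simp only [Finset.prod_insert his]
    have hip : IndepFun (∏ j ∈ s, f j) (f i) μ :=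
      hind.indepFun_finset_prod_of_notMem hm his
    have h1 : Integrable (fun ω => ∏ j ∈ s, f j ω) μ :=
      stmt9_int_of_bdd (s.measurable_prod fun j _ => hm j) (stmt9_prod_bdd f s hb)
    have h2 : Integrable (f i) μ := stmt9_int_of_bdd (hm i) (hb i)
    have h1' : Integrable (∏ j ∈ s, f j) μ := by
      have : (∏ j ∈ s, f j) = fun ω => ∏ j ∈ s, f j ω := by
        funext ω; simp [Finset.prod_apply]
      rw [this]; exact h1
    have := IndepFun.integral_mul_eq_mul_integral hip h1'.aestronglyMeasurable h2.aestronglyMeasurable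
    have heq : ∫ ω, f i ω * ∏ j ∈ s, f j ω ∂μ
        = (∫ ω, (∏ j ∈ s, f j) ω ∂μ) * ∫ ω, f i ω ∂μ := by
      rw [← this]
      congr 1
      funext ω
      simp [Finset.prod_apply, mul_comm]
    rw [heq]
    have : ∫ ω, (∏ j ∈ s, f j) ω ∂μ = ∏ j ∈ s, ∫ ω, f j ω ∂μ := by
      rw [← ih]
      congr 1
      funext ω
      simp [Finset.prod_apply]
    rw [this, mul_comm]

lemma stmt9_count {n : ℕ} (r : Fin n) :
    ∀ T : ℕ, ∑ G : Fin T → Fin n, ((n : ℝ)⁻¹) ^ (((Finset.image G Finset.univ).erase r).card)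
      ≤ ((T : ℝ) + 1) ^ T := by
  classical
  have hn : 0 < n := Fin.pos r
  have hinv0 : (0:ℝ) ≤ (n:ℝ)⁻¹ := by positivity
  intro T
  induction T with
  | zero => simp
  | succ T ih =>
    have key := Equiv.sum_comp (Fin.consEquiv (fun _ : Fin (T+1) => Fin n))
      (fun G : Fin (T+1) → Fin n =>
        ((n : ℝ)⁻¹) ^ (((Finset.image G Finset.univ).erase r).card))
    rw [← key, Fintype.sum_prod_type, Finset.sum_comm]
    have himg : ∀ (x : Fin n) (G' : Fin T → Fin n),
        Finset.image (Fin.cons (α := fun _ => Fin n) x G') Finset.univ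
          = insert x (Finset.image G' Finset.univ) := by
      intro x G'
      ext y
      simp only [Finset.mem_image, Finset.mem_insert, Finset.mem_univ, true_and]
      constructor
      · rintro ⟨i, rfl⟩
        refine Fin.cases ?_ ?_ i
        · left; simp
        · intro j; right; exact ⟨j, by simp⟩
      · rintro (rfl | ⟨i, rfl⟩)
        · exact ⟨0, by simp⟩
        · exact ⟨i.succ, by simp⟩
    have inner : ∀ G' : Fin T → Fin n,
        ∑ x : Fin n, ((n : ℝ)⁻¹) ^
            (((insert x (Finset.image G' Finset.univ)).erase r).card)
          ≤ ((T : ℝ) + 2) * ((n : ℝ)⁻¹) ^ (((Finset.image G' Finset.univ).erase r).card) := by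
      intro G'
      set S := Finset.image G' Finset.univ with hS
      set v := (S.erase r).card with hv
      have hvT : v ≤ T := by
        calc v ≤ S.card := Finset.card_erase_le
        _ ≤ (Finset.univ : Finset (Fin T)).card := Finset.card_image_le
        _ = T := by simp
    -- split the sum
      rw [← Finset.sum_add_sum_compl (insert r S)]
      have h1 : ∀ x ∈ insert r S, ((n : ℝ)⁻¹) ^ (((insert x S).erase r).card)
          = ((n : ℝ)⁻¹) ^ v := by
        intro x hx
        rcases Finset.mem_insert.1 hx with rfl | hxS
        · rw [Finset.erase_insert_eq_erase]
        · rw [Finset.insert_eq_self.2 hxS]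
      have h2 : ∀ x ∈ (insert r S)ᶜ, ((n : ℝ)⁻¹) ^ (((insert x S).erase r).card)
          = (n : ℝ)⁻¹ * ((n : ℝ)⁻¹) ^ v := by
        intro x hx
        rw [Finset.mem_compl, Finset.mem_insert, not_or] at hx
        rw [Finset.erase_insert_of_ne hx.1,
          Finset.card_insert_of_notMem (fun hc => hx.2 (Finset.mem_of_mem_erase hc)),
          pow_succ, mul_comm]
      rw [Finset.sum_congr rfl h1, Finset.sum_congr rfl h2]
      rw [Finset.sum_const, Finset.sum_const]
      have hcard1 : (insert r S).card = v + 1 := by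
        have : insert r S = insert r (S.erase r) := by
          ext y
          simp only [Finset.mem_insert, Finset.mem_erase]
          constructor
          · rintro (rfl | hy)
            · exact Or.inl rfl
            · by_cases hyr : y = r
              · exact Or.inl hyr
              · exact Or.inr ⟨hyr, hy⟩
          · rintro (rfl | ⟨_, hy⟩)
            · exact Or.inl rfl
            · exact Or.inr hy
        rw [this, Finset.card_insert_of_notMem (Finset.notMem_erase _ _)]
      have hcard2 : ((insert r S)ᶜ : Finset (Fin n)).card ≤ n := by
        calc ((insert r S)ᶜ : Finset (Fin n)).card ≤ (Finset.univ : Finset (Fin n)).card :=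
          Finset.card_le_card (Finset.subset_univ _)
        _ = n := by simp
      rw [nsmul_eq_mul, nsmul_eq_mul, hcard1]
      have e2 : (((insert r S)ᶜ : Finset (Fin n)).card : ℝ) * ((n : ℝ)⁻¹ * ((n : ℝ)⁻¹) ^ v)
          ≤ ((n : ℝ)⁻¹) ^ v := by
        calc (((insert r S)ᶜ : Finset (Fin n)).card : ℝ) * ((n : ℝ)⁻¹ * ((n : ℝ)⁻¹) ^ v)
            ≤ (n : ℝ) * ((n : ℝ)⁻¹ * ((n : ℝ)⁻¹) ^ v) := by
              refine mul_le_mul_of_nonneg_right ?_ (by positivity)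
              exact_mod_cast hcard2
          _ = ((n : ℝ) * (n : ℝ)⁻¹) * ((n : ℝ)⁻¹) ^ v := by ring
          _ = ((n : ℝ)⁻¹) ^ v := by
              rw [mul_inv_cancel₀ (by exact_mod_cast hn.ne')]; ring
      have e1 : ((v + 1 : ℕ) : ℝ) * ((n : ℝ)⁻¹) ^ v ≤ ((T : ℝ) + 1) * ((n : ℝ)⁻¹) ^ v := by
        refine mul_le_mul_of_nonneg_right ?_ (by positivity)
        push_cast
        have : (v : ℝ) ≤ (T : ℝ) := by exact_mod_cast hvT
        linarith
      calc ((v + 1 : ℕ) : ℝ) * ((n : ℝ)⁻¹) ^ v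
            + (((insert r S)ᶜ : Finset (Fin n)).card : ℝ) * ((n : ℝ)⁻¹ * ((n : ℝ)⁻¹) ^ v)
          ≤ ((T : ℝ) + 1) * ((n : ℝ)⁻¹) ^ v + ((n : ℝ)⁻¹) ^ v := add_le_add e1 e2
        _ = ((T : ℝ) + 2) * ((n : ℝ)⁻¹) ^ v := by ring
    calc ∑ G' : Fin T → Fin n, ∑ x : Fin n, ((n : ℝ)⁻¹) ^
            (((Finset.image (Fin.consEquiv (fun _ : Fin (T+1) => Fin n) (x, G'))
              Finset.univ).erase r).card)
        = ∑ G' : Fin T → Fin n, ∑ x : Fin n, ((n : ℝ)⁻¹) ^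
            (((insert x (Finset.image G' Finset.univ)).erase r).card) := by
          refine Finset.sum_congr rfl fun G' _ => Finset.sum_congr rfl fun x _ => ?_
          rw [show (Fin.consEquiv (fun _ : Fin (T+1) => Fin n)) (x, G')
            = Fin.cons (α := fun _ => Fin n) x G' from rfl, himg]
      _ ≤ ∑ G' : Fin T → Fin n, ((T : ℝ) + 2) * ((n : ℝ)⁻¹) ^
            (((Finset.image G' Finset.univ).erase r).card) :=
          Finset.sum_le_sum fun G' _ => inner G'
      _ = ((T : ℝ) + 2) * ∑ G' : Fin T → Fin n, ((n : ℝ)⁻¹) ^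
            (((Finset.image G' Finset.univ).erase r).card) := by rw [← Finset.mul_sum]
      _ ≤ ((T : ℝ) + 2) * ((T : ℝ) + 1) ^ T := by
          refine mul_le_mul_of_nonneg_left ih (by positivity)
      _ ≤ ((T : ℝ) + 2) * ((T : ℝ) + 2) ^ T := by
          refine mul_le_mul_of_nonneg_left (pow_le_pow_left₀ (by positivity) (by linarith) T)
            (by positivity)
      _ = (((T + 1 : ℕ) : ℝ) + 1) ^ (T + 1) := by
          push_cast
          rw [pow_succ]
          ring
  

def stmt9canon {n : ℕ} (x y : Fin n) : {q : Fin n × Fin n // q.1 ≤ q.2} :=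
  if h : x ≤ y then ⟨(x, y), h⟩ else ⟨(y, x), le_of_not_ge h⟩

lemma stmt9canon_snd_mem {n : ℕ} (x y w1 w2 : Fin n)
    (hEq : stmt9canon x y = stmt9canon w1 w2) : w2 = x ∨ w2 = y := by
  unfold stmt9canon at hEq
  split_ifs at hEq <;> simp [Subtype.ext_iff, Prod.ext_iff] at hEq <;> tauto

lemma stmt9canon_apply {n : ℕ} {Ω : Type*} (h : Fin n → Fin n → Ω → ℝ)
    (hsymm : ∀ i j ω, h i j ω = h j i ω) (x y : Fin n) (ω : Ω) :
    h x y ω = h (stmt9canon x y).1.1 (stmt9canon x y).1.2 ω := by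
  unfold stmt9canon
  split_ifs <;> simp [hsymm x y]

lemma stmt9_v_le_d {n K a : ℕ} (r : Fin n) (g : Fin K → Fin a → Fin n) :
    ((Finset.image (fun p : Fin K × Fin a => g p.1 p.2) Finset.univ).erase r).card
      ≤ (Finset.image (fun p : Fin K × Fin a =>
          stmt9canon ((Fin.cons (α := fun _ => Fin n) r (g p.1)) p.2.castSucc) (g p.1 p.2))
          Finset.univ).card := by
  classical
  set ord : Fin K × Fin a → ℕ := fun p => (p.1 : ℕ) * a + (p.2 : ℕ) with hord
  set pv : Fin K × Fin a → Fin n :=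
    fun p => (Fin.cons (α := fun _ => Fin n) r (g p.1)) p.2.castSucc with hpv
  set E : Fin K × Fin a → {q : Fin n × Fin n // q.1 ≤ q.2} :=
    fun p => stmt9canon (pv p) (g p.1 p.2) with hE
  set V := (Finset.image (fun p : Fin K × Fin a => g p.1 p.2) Finset.univ).erase r with hV
  -- previous-vertex dichotomy
  have hprev : ∀ p : Fin K × Fin a, pv p = r ∨
      ∃ p' : Fin K × Fin a, ord p' < ord p ∧ g p'.1 p'.2 = pv p := by
    rintro ⟨j, i⟩
    rcases a with _ | a'
    · exact i.elim0
    induction i using Fin.cases with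
    | zero =>
      left
      simp [hpv]
    | succ i' =>
      right
      refine ⟨(j, i'.castSucc), ?_, ?_⟩
      · simp only [hord]
        simp [Fin.val_succ]
      · simp only [hpv]
        rw [← Fin.succ_castSucc, Fin.cons_succ]
  -- minimal position choice
  have hex : ∀ y ∈ V, ∃ p : Fin K × Fin a,
      g p.1 p.2 = y ∧ ∀ p', g p'.1 p'.2 = y → ord p ≤ ord p' := by
    intro y hy
    have hy' := Finset.mem_of_mem_erase hy
    obtain ⟨p₀, _, hp₀⟩ := Finset.mem_image.1 hy'
    obtain ⟨p, hp, hmin⟩ := Finset.exists_min_image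
      (Finset.univ.filter (fun p : Fin K × Fin a => g p.1 p.2 = y)) ord
      ⟨p₀, Finset.mem_filter.2 ⟨Finset.mem_univ _, hp₀⟩⟩
    refine ⟨p, (Finset.mem_filter.1 hp).2, fun p' hp' => hmin p'
      (Finset.mem_filter.2 ⟨Finset.mem_univ _, hp'⟩)⟩
  set P : Fin n → (Fin K × Fin a) → Prop :=
    fun y p => g p.1 p.2 = y ∧ ∀ p', g p'.1 p'.2 = y → ord p ≤ ord p' with hP
  refine Finset.card_le_card_of_injOn
    (fun y => if hy : ∃ p, P y p then E (Classical.choose hy) else stmt9canon r r) ?_ ?_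
  · intro y hy
    have hy2 : ∃ p, P y p := hex y hy
    simp only [hy2, dif_pos]
    exact Finset.mem_image.2 ⟨Classical.choose hy2, Finset.mem_univ _, rfl⟩
  · intro y hy z hz hEq
    by_contra hyz
    have hy2 : ∃ p, P y p := hex y hy
    have hz2 : ∃ p, P z p := hex z hz
    simp only [hy2, hz2, dif_pos] at hEq
    set p := Classical.choose hy2 with hp
    set q := Classical.choose hz2 with hq
    obtain ⟨hgp, hminy⟩ := Classical.choose_spec hy2
    obtain ⟨hgq, hminz⟩ := Classical.choose_spec hz2
    -- hEq : E p = E q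
    have hcom1 : g q.1 q.2 = pv p ∨ g q.1 q.2 = g p.1 p.2 :=
      stmt9canon_snd_mem _ _ _ _ hEq
    have hcom2 : g p.1 p.2 = pv q ∨ g p.1 p.2 = g q.1 q.2 :=
      stmt9canon_snd_mem _ _ _ _ hEq.symm
    have hzy : g q.1 q.2 ≠ g p.1 p.2 := by
      rw [hgp, hgq]; exact fun hc => hyz hc.symm
    have hzpv : g q.1 q.2 = pv p := hcom1.resolve_right hzy
    have hypv : g p.1 p.2 = pv q := hcom2.resolve_right (fun hc => hzy hc.symm)
    have hlt1 : ord q < ord p := by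
      rcases hprev p with hr | ⟨p', hlt, hgp'⟩
      · exact absurd (hgq.symm.trans (hzpv.trans hr))
          (Finset.ne_of_mem_erase hz)
      · exact lt_of_le_of_lt (hminz p' (by rw [hgp', ← hzpv, hgq])) hlt
    have hlt2 : ord p < ord q := by
      rcases hprev q with hr | ⟨q', hlt, hgq'⟩
      · exact absurd (hgp.symm.trans (hypv.trans hr))
          (Finset.ne_of_mem_erase hy)
      · exact lt_of_le_of_lt (hminy q' (by rw [hgq', ← hypv, hgp])) hlt
    exact absurd hlt1 (not_lt.2 hlt2.le)


section trans
-- transfer lemma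
lemma stmt9_transfer {n K a : ℕ} (r : Fin n)
    (hcount : ∀ T : ℕ, ∑ G : Fin T → Fin n,
      ((n : ℝ)⁻¹) ^ (((Finset.image G Finset.univ).erase r).card) ≤ ((T : ℝ) + 1) ^ T) :
    ∑ g : Fin K → Fin a → Fin n,
      ((n : ℝ)⁻¹) ^ (((Finset.image (fun p : Fin K × Fin a => g p.1 p.2)
        Finset.univ).erase r).card)
      ≤ (((K * a : ℕ) : ℝ) + 1) ^ (K * a) := by
  classical
  have e1 := Equiv.sum_comp (Equiv.curry (Fin K) (Fin a) (Fin n))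
    (fun g : Fin K → Fin a → Fin n =>
      ((n : ℝ)⁻¹) ^ (((Finset.image (fun p : Fin K × Fin a => g p.1 p.2)
        Finset.univ).erase r).card))
  rw [← e1]
  have h1 : ∀ f : Fin K × Fin a → Fin n,
      (fun p : Fin K × Fin a => (Equiv.curry (Fin K) (Fin a) (Fin n) f) p.1 p.2) = f := by
    intro f; funext p; cases p; rfl
  simp only [h1]
  have e2 := Equiv.sum_comp (Equiv.arrowCongr finProdFinEquiv.symm (Equiv.refl (Fin n)))
    (fun f : Fin K × Fin a → Fin n =>
      ((n : ℝ)⁻¹) ^ (((Finset.image f Finset.univ).erase r).card))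
  rw [← e2]
  have h2 : ∀ G : Fin (K * a) → Fin n,
      Finset.image ((Equiv.arrowCongr finProdFinEquiv.symm (Equiv.refl (Fin n))) G)
        Finset.univ = Finset.image G Finset.univ := by
    intro G
    have : ((Equiv.arrowCongr finProdFinEquiv.symm (Equiv.refl (Fin n))) G)
        = G ∘ ⇑(finProdFinEquiv : Fin K × Fin a ≃ Fin (K * a)) := by
      funext p; rfl
    rw [this, ← Finset.image_image]
    congr 1
    apply Finset.eq_univ_of_forall
    intro t
    exact Finset.mem_image.2 ⟨finProdFinEquiv.symm t, Finset.mem_univ _, finProdFinEquiv.apply_symm_apply t⟩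
  simp only [h2]
  exact_mod_cast hcount (K * a)

end trans

lemma stmt9_numeric {c L : ℝ} {T : ℕ} (hL : 1 ≤ L) (hc : 25 ≤ 4 * c)
    (hT1 : 2 * L ≤ (T : ℝ)) (hT2 : (T : ℝ) ≤ 4 * L) :
    (c / 4) ^ (2 * L) ≤ (c * L / ((T : ℝ) + 1)) ^ (T : ℝ) := by
  have hL0 : 0 < L := by linarith
  have hc0 : (0:ℝ) < c := by linarith
  set δ : ℝ := 1 / L with hδ
  have hδ0 : 0 < δ := by positivity
  have hδ1 : δ ≤ 1 := by rw [hδ]; rw [div_le_one hL0]; linarith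
  set s : ℝ := (T : ℝ) / (2 * L) with hs
  have hs1 : 1 ≤ s := by rw [hs, le_div_iff₀ (by linarith)]; linarith
  have hs2 : s ≤ 2 := by rw [hs, div_le_iff₀ (by linarith)]; linarith
  have hs0 : 0 < s := by linarith
  set A : ℝ := 2 + δ with hA
  set B : ℝ := 4 + δ with hB
  set C : ℝ := 2 * s + δ with hC
  have hA0 : 0 < A := by rw [hA]; linarith
  have hB0 : 0 < B := by rw [hB]; linarith
  have hC0 : 0 < C := by rw [hC]; linarith
  set w1 : ℝ := (2 - s) / s with hw1
  set w2 : ℝ := 2 * (s - 1) / s with hw2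
  have hw10 : 0 ≤ w1 := by apply div_nonneg <;> linarith
  have hw20 : 0 ≤ w2 := by apply div_nonneg <;> linarith
  have hwsum : w1 + w2 = 1 := by rw [hw1, hw2]; field_simp; ring
  -- harmonic-mean type inequality
  have hHM : w1 * A⁻¹ + w2 * B⁻¹ ≤ C⁻¹ := by
    have key : (2 - s) * (B * C) + 2 * (s - 1) * (A * C) ≤ s * (A * B) := by
      have hid : s * (A * B) - ((2 - s) * (B * C) + 2 * (s - 1) * (A * C))
          = 2 * δ * ((s - 1) * (2 - s)) := by rw [hA, hB, hC]; ring
      nlinarith [mul_nonneg (mul_nonneg (by linarith : (0:ℝ) ≤ 2 * δ)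
        (by linarith : (0:ℝ) ≤ s - 1)) (by linarith : (0:ℝ) ≤ 2 - s)]
    have hM : 0 < s * A * B * C := by positivity
    have e1 : ((2 - s) / s * A⁻¹ + 2 * (s - 1) / s * B⁻¹) * (s * A * B * C)
        = (2 - s) * (B * C) + 2 * (s - 1) * (A * C) := by
      field_simp
    have e2 : C⁻¹ * (s * A * B * C) = s * (A * B) := by
      field_simp
    rw [hw1, hw2, ← mul_le_mul_iff_of_pos_right hM, e1, e2]
    exact key
  -- AM-GM
  have hAM : (A⁻¹) ^ w1 * (B⁻¹) ^ w2 ≤ w1 * A⁻¹ + w2 * B⁻¹ :=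
    Real.geom_mean_le_arith_mean2_weighted hw10 hw20 (by positivity) (by positivity) hwsum
  have hCle : C ≤ A ^ w1 * B ^ w2 := by
    have h1 : (A ^ w1 * B ^ w2)⁻¹ ≤ C⁻¹ := by
      have : (A⁻¹) ^ w1 * (B⁻¹) ^ w2 = (A ^ w1 * B ^ w2)⁻¹ := by
        rw [Real.inv_rpow hA0.le, Real.inv_rpow hB0.le, mul_inv]
      linarith [hAM.trans hHM, this.symm.le]
    have hpos : 0 < A ^ w1 * B ^ w2 := by positivity
    rw [inv_le_inv₀ hpos hC0] at h1
    exact h1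
  -- raise to power s
  have hCs : C ^ s ≤ A ^ (2 - s) * B ^ (2 * (s - 1)) := by
    calc C ^ s ≤ (A ^ w1 * B ^ w2) ^ s := Real.rpow_le_rpow hC0.le hCle hs0.le
      _ = (A ^ w1) ^ s * (B ^ w2) ^ s := Real.mul_rpow (by positivity) (by positivity)
      _ = A ^ (w1 * s) * B ^ (w2 * s) := by
          rw [← Real.rpow_mul hA0.le, ← Real.rpow_mul hB0.le]
      _ = A ^ (2 - s) * B ^ (2 * (s - 1)) := by
          rw [hw1, hw2, div_mul_cancel₀ _ hs0.ne', div_mul_cancel₀ _ hs0.ne']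
  -- bound by 4 * c^(s-1)
  have hCs4 : C ^ s ≤ 4 * c ^ (s - 1) := by
    have hA4 : A ^ (2 - s) ≤ (4:ℝ) ^ (2 - s) :=
      Real.rpow_le_rpow hA0.le (by rw [hA]; linarith) (by linarith)
    have hB4 : B ^ (2 * (s - 1)) ≤ (4 * c) ^ (s - 1) := by
      have h1 : B ^ (2 * (s - 1)) = (B ^ (2:ℝ)) ^ (s - 1) := by
        rw [← Real.rpow_mul hB0.le]
      have h2 : B ^ (2:ℝ) ≤ 4 * c := by
        rw [Real.rpow_two]
        nlinarith
      rw [h1]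
      exact Real.rpow_le_rpow (by positivity) h2 (by linarith)
    calc C ^ s ≤ A ^ (2 - s) * B ^ (2 * (s - 1)) := hCs
      _ ≤ (4:ℝ) ^ (2 - s) * (4 * c) ^ (s - 1) := by
          refine mul_le_mul hA4 hB4 (by positivity) (by positivity)
      _ = (4:ℝ) ^ (2 - s) * ((4:ℝ) ^ (s - 1) * c ^ (s - 1)) := by
          rw [Real.mul_rpow (by norm_num) hc0.le]
      _ = ((4:ℝ) ^ (2 - s) * (4:ℝ) ^ (s - 1)) * c ^ (s - 1) := by ring
      _ = 4 * c ^ (s - 1) := by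
          rw [← Real.rpow_add (by norm_num : (0:ℝ) < 4)]
          norm_num
  -- conclude c/4 ≤ (c/C)^s
  have hmain : c / 4 ≤ (c / C) ^ s := by
    have hcs1 : 0 < c ^ (s - 1) := Real.rpow_pos_of_pos hc0 _
    have h1 : (c / C) ^ s = c ^ s / C ^ s := Real.div_rpow hc0.le hC0.le s
    have h2 : c ^ s = c * c ^ (s - 1) := by
      have h3 := Real.rpow_add hc0 1 (s - 1)
      rw [show (1:ℝ) + (s - 1) = s by ring] at h3
      rw [h3, Real.rpow_one]
    rw [h1, div_le_div_iff₀ (by norm_num) (Real.rpow_pos_of_pos hC0 s)]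
    calc c * C ^ s ≤ c * (4 * c ^ (s - 1)) := mul_le_mul_of_nonneg_left hCs4 hc0.le
      _ = c ^ s * 4 := by rw [h2]; ring
  -- final assembly
  have hCL : C * L = (T : ℝ) + 1 := by
    rw [hC, hs, hδ]
    field_simp
  have hcC : c / C = c * L / ((T : ℝ) + 1) := by
    rw [← hCL, mul_comm C L, show c * L / (L * C) = c * L / (C * L) by rw [mul_comm C L]]
    rw [mul_div_mul_right _ _ hL0.ne']
  calc (c / 4) ^ (2 * L) ≤ ((c / C) ^ s) ^ (2 * L) :=
        Real.rpow_le_rpow (by positivity) hmain (by linarith)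
    _ = (c / C) ^ (s * (2 * L)) := (Real.rpow_mul (by positivity) _ _).symm
    _ = (c / C) ^ (T : ℝ) := by
        rw [show s * (2 * L) = (T : ℝ) by rw [hs]; field_simp]
    _ = (c * L / ((T : ℝ) + 1)) ^ (T : ℝ) := by rw [hcC]

lemma stmt9_moment {n : ℕ} {Ω : Type*} [MeasurableSpace Ω] (μ : Measure Ω)
    [IsProbabilityMeasure μ]
    (h : Fin n → Fin n → Ω → ℝ) (hmeas : ∀ i j, Measurable (h i j))
    (hsymm : ∀ i j ω, h i j ω = h j i ω)
    (hindep : iIndepFun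
      (fun q : {q : Fin n × Fin n // q.1 ≤ q.2} => h q.1.1 q.1.2) μ)
    (hmean : ∀ i j, (∫ ω, h i j ω ∂μ) = 0)
    (hbdd : ∀ i j, ∀ᵐ ω ∂μ, |h i j ω| < 1)
    (hmom2 : ∀ i j, (∫ ω, |h i j ω| ^ 2 ∂μ) ≤ 1 / n)
    (u : Fin n → ℝ) (r : Fin n) (a K : ℕ) :
    ∫ ω, (((Matrix.of fun i j => h i j ω) ^ a).mulVec u r) ^ K ∂μ
      ≤ (⨆ i, |u i|) ^ K * ((((K * a : ℕ) : ℝ) + 1) ^ (K * a)) := by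
  classical
  have hn : 0 < n := Fin.pos r
  have hn1 : (1:ℝ) ≤ (n:ℝ) := by exact_mod_cast hn
  set S : ℝ := ⨆ i, |u i| with hS
  have hules : ∀ i, |u i| ≤ S := fun i =>
    le_ciSup (f := fun i => |u i|) (Finite.bddAbove_range _) i
  have hsup0 : 0 ≤ S := le_trans (abs_nonneg (u r)) (hules r)
  set Hq : {q : Fin n × Fin n // q.1 ≤ q.2} → Ω → ℝ := fun q => h q.1.1 q.1.2 with hHq
  set Eg : (Fin K → Fin a → Fin n) → Fin K × Fin a → {q : Fin n × Fin n // q.1 ≤ q.2} :=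
    fun g p => stmt9canon ((Fin.cons (α := fun _ => Fin n) r (g p.1)) p.2.castSucc)
      (g p.1 p.2) with hEg
  set mq : (Fin K → Fin a → Fin n) → {q : Fin n × Fin n // q.1 ≤ q.2} → ℕ :=
    fun g q => (Finset.univ.filter (fun p => Eg g p = q)).card with hmq
  set Ug : (Fin K → Fin a → Fin n) → ℝ :=
    fun g => ∏ j : Fin K, u ((Fin.cons (α := fun _ => Fin n) r (g j)) (Fin.last a)) with hUg
  set vg : (Fin K → Fin a → Fin n) → ℕ :=
    fun g => ((Finset.image (fun p : Fin K × Fin a => g p.1 p.2) Finset.univ).erase r).card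
    with hvg
  have hmeasHq : ∀ q, Measurable (Hq q) := fun q => hmeas _ _
  have hbddHq : ∀ q, ∀ᵐ ω ∂μ, |Hq q ω| < 1 := fun q => hbdd _ _
  have hbddpow : ∀ (g : Fin K → Fin a → Fin n) q, ∀ᵐ ω ∂μ, |Hq q ω ^ mq g q| ≤ 1 := by
    intro g q
    filter_upwards [hbddHq q] with ω h1
    rw [abs_pow]
    exact pow_le_one₀ (abs_nonneg _) h1.le
  -- pointwise expansion
  have hpoint : ∀ ω, (((Matrix.of fun i j => h i j ω) ^ a).mulVec u r) ^ K
      = ∑ g : Fin K → Fin a → Fin n,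
          Ug g * ∏ q ∈ Finset.image (Eg g) Finset.univ, (Hq q ω) ^ (mq g q) := by
    intro ω
    rw [stmt9_expand]
    have e0 := Finset.prod_univ_sum (fun _ : Fin K => (Finset.univ : Finset (Fin a → Fin n)))
      (fun _j (p : Fin a → Fin n) =>
        (∏ i : Fin a, (Matrix.of fun i j => h i j ω)
          ((Fin.cons (α := fun _ => Fin n) r p) i.castSucc) (p i))
          * u ((Fin.cons (α := fun _ => Fin n) r p) (Fin.last a)))
    rw [show (∑ p : Fin a → Fin n,
        (∏ i : Fin a, (Matrix.of fun i j => h i j ω)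
          ((Fin.cons (α := fun _ => Fin n) r p) i.castSucc) (p i))
          * u ((Fin.cons (α := fun _ => Fin n) r p) (Fin.last a))) ^ K
      = ∏ _j : Fin K, ∑ p : Fin a → Fin n,
        (∏ i : Fin a, (Matrix.of fun i j => h i j ω)
          ((Fin.cons (α := fun _ => Fin n) r p) i.castSucc) (p i))
          * u ((Fin.cons (α := fun _ => Fin n) r p) (Fin.last a)) by
        rw [Finset.prod_const, Finset.card_univ, Fintype.card_fin]]
    rw [e0, Fintype.piFinset_univ]
    refine Finset.sum_congr rfl fun g _ => ?_
    rw [Finset.prod_mul_distrib]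
    rw [mul_comm]
    congr 1
    have e1 : ∏ j : Fin K, ∏ i : Fin a, (Matrix.of fun i j => h i j ω)
        ((Fin.cons (α := fun _ => Fin n) r (g j)) i.castSucc) (g j i)
        = ∏ p : Fin K × Fin a, Hq (Eg g p) ω := by
      rw [Fintype.prod_prod_type]
      refine Finset.prod_congr rfl fun j _ => Finset.prod_congr rfl fun i _ => ?_
      exact stmt9canon_apply h hsymm _ _ ω
    rw [e1]
    exact Finset.prod_comp (fun q => Hq q ω) (Eg g)
  -- integrability of products
  have hprodint : ∀ g : Fin K → Fin a → Fin n,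
      Integrable (fun ω => ∏ q ∈ Finset.image (Eg g) Finset.univ, (Hq q ω) ^ (mq g q)) μ := by
    intro g
    refine stmt9_int_of_bdd ?_ ?_
    · exact Finset.measurable_prod _ fun q _ => (hmeasHq q).pow_const _
    · exact stmt9_prod_bdd (fun q ω => Hq q ω ^ mq g q) _ (hbddpow g)
  -- factor the integral
  have e2 : ∀ g : Fin K → Fin a → Fin n,
      ∫ ω, Ug g * ∏ q ∈ Finset.image (Eg g) Finset.univ, (Hq q ω) ^ (mq g q) ∂μ
        = Ug g * ∏ q ∈ Finset.image (Eg g) Finset.univ, ∫ ω, (Hq q ω) ^ (mq g q) ∂μ := by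
    intro g
    rw [MeasureTheory.integral_const_mul]
    congr 1
    refine stmt9_indep_integral (fun q ω => (Hq q ω) ^ (mq g q)) ?_
      (fun q => (hmeasHq q).pow_const _) (hbddpow g) _
    exact hindep.comp (fun q (x : ℝ) => x ^ (mq g q)) (fun q => measurable_id.pow_const _)
  -- per-g bound
  have e3 : ∀ g : Fin K → Fin a → Fin n,
      Ug g * ∏ q ∈ Finset.image (Eg g) Finset.univ, ∫ ω, (Hq q ω) ^ (mq g q) ∂μ
        ≤ S ^ K * ((n : ℝ)⁻¹) ^ (vg g) := by
    intro g
    have hU : |Ug g| ≤ S ^ K := by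
      rw [hUg]
      calc |∏ j : Fin K, u ((Fin.cons (α := fun _ => Fin n) r (g j)) (Fin.last a))|
          = ∏ j : Fin K, |u ((Fin.cons (α := fun _ => Fin n) r (g j)) (Fin.last a))| :=
            Finset.abs_prod _ _
        _ ≤ ∏ _j : Fin K, S :=
            Finset.prod_le_prod (fun _ _ => abs_nonneg _) (fun j _ => hules _)
        _ = S ^ K := by rw [Finset.prod_const, Finset.card_univ, Fintype.card_fin]
    by_cases hval : ∀ q ∈ Finset.image (Eg g) Finset.univ, 2 ≤ mq g q
    · have hfac : ∀ q ∈ Finset.image (Eg g) Finset.univ,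
          |∫ ω, (Hq q ω) ^ (mq g q) ∂μ| ≤ (n : ℝ)⁻¹ := by
        intro q hq
        have h1 : |∫ ω, (Hq q ω) ^ (mq g q) ∂μ| ≤ ∫ ω, |Hq q ω ^ mq g q| ∂μ :=
          by
            simpa using MeasureTheory.norm_integral_le_integral_norm
              (fun ω => (Hq q ω) ^ (mq g q)) (μ := μ)
        have h2 : ∫ ω, |Hq q ω ^ mq g q| ∂μ ≤ ∫ ω, |Hq q ω| ^ 2 ∂μ := by
          refine integral_mono_ae ?_ ?_ ?_
          · refine stmt9_int_of_bdd ((hmeasHq q).pow_const _).abs ?_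
            filter_upwards [hbddpow g q] with ω h3 using by rwa [abs_abs]
          · refine stmt9_int_of_bdd ((hmeasHq q).abs.pow_const _) ?_
            filter_upwards [hbddHq q] with ω h3
            rw [abs_pow, abs_abs]
            exact pow_le_one₀ (abs_nonneg _) h3.le
          · filter_upwards [hbddHq q] with ω h3
            rw [abs_pow]
            exact pow_le_pow_of_le_one (abs_nonneg _) h3.le (hval q hq)
        have h3 := hmom2 q.1.1 q.1.2
        rw [one_div] at h3
        exact h1.trans (h2.trans h3)
      calc Ug g * ∏ q ∈ Finset.image (Eg g) Finset.univ, ∫ ω, (Hq q ω) ^ (mq g q) ∂μ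
          ≤ |Ug g * ∏ q ∈ Finset.image (Eg g) Finset.univ, ∫ ω, (Hq q ω) ^ (mq g q) ∂μ| :=
            le_abs_self _
        _ = |Ug g| * |∏ q ∈ Finset.image (Eg g) Finset.univ, ∫ ω, (Hq q ω) ^ (mq g q) ∂μ| :=
            abs_mul _ _
        _ ≤ S ^ K * ((n : ℝ)⁻¹) ^ ((Finset.image (Eg g) Finset.univ).card) := by
            refine mul_le_mul hU ?_ (abs_nonneg _) (pow_nonneg hsup0 _)
            rw [Finset.abs_prod]
            calc ∏ q ∈ Finset.image (Eg g) Finset.univ, |∫ ω, (Hq q ω) ^ (mq g q) ∂μ|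
                ≤ ∏ _q ∈ Finset.image (Eg g) Finset.univ, (n : ℝ)⁻¹ :=
                  Finset.prod_le_prod (fun _ _ => abs_nonneg _) hfac
              _ = ((n : ℝ)⁻¹) ^ ((Finset.image (Eg g) Finset.univ).card) :=
                  Finset.prod_const _
        _ ≤ S ^ K * ((n : ℝ)⁻¹) ^ (vg g) := by
            refine mul_le_mul_of_nonneg_left ?_ (pow_nonneg hsup0 _)
            refine pow_le_pow_of_le_one (by positivity) ?_ ?_
            · exact inv_le_one_of_one_le₀ hn1
            · exact stmt9_v_le_d r g
    · push_neg at hval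
      obtain ⟨q₀, hq₀, hlt⟩ := hval
      have hm1 : mq g q₀ = 1 := by
        obtain ⟨p, _, hp⟩ := Finset.mem_image.1 hq₀
        have hpos : 0 < mq g q₀ :=
          Finset.card_pos.2 ⟨p, Finset.mem_filter.2 ⟨Finset.mem_univ _, hp⟩⟩
        omega
      have hzero : ∫ ω, (Hq q₀ ω) ^ (mq g q₀) ∂μ = 0 := by
        rw [hm1]
        simp only [pow_one]
        exact hmean _ _
      rw [Finset.prod_eq_zero hq₀ hzero, mul_zero]
      positivity
  -- put everything together
  calc ∫ ω, (((Matrix.of fun i j => h i j ω) ^ a).mulVec u r) ^ K ∂μ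
      = ∫ ω, (∑ g : Fin K → Fin a → Fin n,
          Ug g * ∏ q ∈ Finset.image (Eg g) Finset.univ, (Hq q ω) ^ (mq g q)) ∂μ :=
        integral_congr_ae (Filter.Eventually.of_forall hpoint)
    _ = ∑ g : Fin K → Fin a → Fin n,
          ∫ ω, Ug g * ∏ q ∈ Finset.image (Eg g) Finset.univ, (Hq q ω) ^ (mq g q) ∂μ :=
        integral_finset_sum _ (fun g _ => (hprodint g).const_mul _)
    _ = ∑ g : Fin K → Fin a → Fin n,
          Ug g * ∏ q ∈ Finset.image (Eg g) Finset.univ, ∫ ω, (Hq q ω) ^ (mq g q) ∂μ :=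
        Finset.sum_congr rfl (fun g _ => e2 g)
    _ ≤ ∑ g : Fin K → Fin a → Fin n, S ^ K * ((n : ℝ)⁻¹) ^ (vg g) :=
        Finset.sum_le_sum (fun g _ => e3 g)
    _ = S ^ K * ∑ g : Fin K → Fin a → Fin n, ((n : ℝ)⁻¹) ^ (vg g) := by
        rw [← Finset.mul_sum]
    _ ≤ S ^ K * ((((K * a : ℕ) : ℝ) + 1) ^ (K * a)) := by
        refine mul_le_mul_of_nonneg_left ?_ (pow_nonneg hsup0 _)
        exact stmt9_transfer r (stmt9_count r)

/-- Entries of powers of a random symmetric matrix with independent centered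
entries (all moments up to order `2 log n` bounded by `1/n`) applied to a fixed
vector `u` are bounded: with probability at least `1 − n^{1 − 2 log(c/4)}`,
`|⟨e_r, Ĥᵃ u⟩| ≤ (c log n)ᵃ ‖u‖_∞` for all `r`. -/
theorem stmt9 (n a : ℕ) (ha1 : 1 ≤ a) (ha2 : (a : ℝ) ≤ Real.log n)
    (u : Fin n → ℝ) (c : ℝ) (hc : 4 < c)
    (Ω : Type*) [MeasurableSpace Ω] (μ : Measure Ω) [IsProbabilityMeasure μ]
    (h : Fin n → Fin n → Ω → ℝ)
    (hmeas : ∀ i j, Measurable (h i j))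
    (hsymm : ∀ i j ω, h i j ω = h j i ω)
    (hindep : iIndepFun
      (fun q : {q : Fin n × Fin n // q.1 ≤ q.2} => h q.1.1 q.1.2) μ)
    (hmean : ∀ i j, (∫ ω, h i j ω ∂μ) = 0)
    (hbdd : ∀ i j, ∀ᵐ ω ∂μ, |h i j ω| < 1)
    (hmom : ∀ i j, ∀ k : ℕ, 2 ≤ k → (k : ℝ) ≤ 2 * Real.log n →
      (∫ ω, |h i j ω| ^ k ∂μ) ≤ 1 / n) :
    μ {ω | ∀ r : Fin n,
        |((Matrix.of fun i j => h i j ω) ^ a).mulVec u r|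
          ≤ (c * Real.log n) ^ a * ⨆ i, |u i|}
      ≥ ENNReal.ofReal (1 - (n : ℝ) ^ ((1 : ℝ) - 2 * Real.log (c / 4))) := by
  classical
  set L : ℝ := Real.log n with hL
  have haL : (1:ℝ) ≤ L := le_trans (by exact_mod_cast ha1) ha2
  have hnR1 : (1:ℝ) < (n:ℝ) := by
    by_contra hcon
    push_neg at hcon
    have : L ≤ 0 := Real.log_nonpos (by positivity) hcon
    linarith
  have hnR0 : (0:ℝ) < (n:ℝ) := lt_trans zero_lt_one hnR1
  have hn0 : 0 < n := by exact_mod_cast hnR0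
  set ε : ℝ := (n : ℝ) ^ ((1 : ℝ) - 2 * Real.log (c / 4)) with hε
  have hε0 : 0 < ε := Real.rpow_pos_of_pos hnR0 _
  by_cases hhard : 1/2 < Real.log (c/4)
  swap
  · push_neg at hhard
    have h1 : (1:ℝ) ≤ ε := Real.one_le_rpow hnR1.le (by linarith)
    have h2 : ENNReal.ofReal (1 - ε) = 0 := ENNReal.ofReal_eq_zero.2 (by linarith)
    rw [ge_iff_le, h2]
    exact zero_le
  -- c is at least 6.25
  have hc40 : (0:ℝ) < c/4 := by linarith
  have hc25 : (25:ℝ) ≤ 4 * c := by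
    have he : Real.exp (1/2) < c/4 := by
      have h2 : c/4 = Real.exp (Real.log (c/4)) := (Real.exp_log hc40).symm
      rw [h2]
      exact Real.exp_lt_exp.2 hhard
    have hsq : Real.exp 1 = Real.exp (1/2) * Real.exp (1/2) := by
      rw [← Real.exp_add]; norm_num
    have he1 : (2.7182818283 : ℝ) < Real.exp 1 := Real.exp_one_gt_d9
    nlinarith [Real.exp_pos (1/2), sq_nonneg (Real.exp (1/2) - 1.5625),
      sq_nonneg (c/4 - Real.exp (1/2))]
  set S : ℝ := ⨆ i, |u i| with hSu
  have hules : ∀ i, |u i| ≤ S := fun i =>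
    le_ciSup (f := fun i => |u i|) (Finite.bddAbove_range _) i
  have hsup0 : 0 ≤ S := le_trans (abs_nonneg (u ⟨0, hn0⟩)) (hules ⟨0, hn0⟩)
  by_cases hu0 : S = 0
  · have hu : u = 0 := by
      funext i
      exact abs_eq_zero.1 (le_antisymm (hu0 ▸ hules i) (abs_nonneg _))
    have hall : {ω : Ω | ∀ r : Fin n,
        |((Matrix.of fun i j => h i j ω) ^ a).mulVec u r| ≤ (c * L) ^ a * S} = Set.univ := by
      ext ω
      simp only [Set.mem_setOf_eq, Set.mem_univ, iff_true]
      intro r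
      rw [hu, Matrix.mulVec_zero]
      simp only [Pi.zero_apply, abs_zero]
      rw [hu0]
      simp
    rw [hall, measure_univ]
    exact ENNReal.ofReal_le_one.2 (by linarith)
  have hsup_pos : 0 < S := lt_of_le_of_ne hsup0 (Ne.symm hu0)
  -- choice of parameters
  set k : ℕ := ⌈L / (a : ℝ)⌉₊ with hk
  set K : ℕ := 2 * k with hK
  set T : ℕ := K * a with hT
  have haR : (0:ℝ) < (a:ℝ) := by exact_mod_cast ha1
  have hk1 : L / (a:ℝ) ≤ (k:ℝ) := Nat.le_ceil _
  have hk2 : (k:ℝ) < L / (a:ℝ) + 1 := Nat.ceil_lt_add_one (by positivity)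
  have hTR : (T : ℝ) = 2 * (k:ℝ) * (a:ℝ) := by rw [hT, hK]; push_cast; ring
  have hT1 : 2 * L ≤ (T : ℝ) := by
    have h1 : L ≤ (k:ℝ) * (a:ℝ) := by
      rw [← div_mul_cancel₀ L haR.ne']
      exact mul_le_mul_of_nonneg_right hk1 haR.le
    rw [hTR]; linarith
  have hT2 : (T : ℝ) ≤ 4 * L := by
    have h1 : (k:ℝ) * (a:ℝ) < L + (a:ℝ) := by
      calc (k:ℝ) * (a:ℝ) < (L / (a:ℝ) + 1) * (a:ℝ) := mul_lt_mul_of_pos_right hk2 haR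
        _ = L + (a:ℝ) := by field_simp
    rw [hTR]; linarith [ha2]
  -- measurability
  have hXmeas : ∀ r : Fin n,
      Measurable (fun ω => ((Matrix.of fun i j => h i j ω) ^ a).mulVec u r) := by
    intro r
    have hfe : (fun ω => ((Matrix.of fun i j => h i j ω) ^ a).mulVec u r)
        = fun ω => ∑ p : Fin a → Fin n,
            (∏ i : Fin a, h ((Fin.cons (α := fun _ => Fin n) r p) i.castSucc) (p i) ω)
              * u ((Fin.cons (α := fun _ => Fin n) r p) (Fin.last a)) := by
      funext ω
      rw [stmt9_expand]
      rfl
    rw [hfe]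
    refine Finset.measurable_sum _ fun p _ => ?_
    exact (Finset.measurable_prod _ fun i _ => hmeas _ _).mul_const _
  set t : ℝ := (c * L) ^ a * S with ht
  have hcL0 : (0:ℝ) < c * L := mul_pos (by linarith) (by linarith)
  have ht0 : 0 < t := mul_pos (pow_pos hcL0 a) hsup_pos
  -- bad events
  set bad : Fin n → Set Ω :=
    fun r => {ω | t < |((Matrix.of fun i j => h i j ω) ^ a).mulVec u r|} with hbad
  have hbadmeas : ∀ r, MeasurableSet (bad r) :=
    fun r => measurableSet_lt measurable_const (hXmeas r).abs
  -- a.e. boundedness of all entries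
  have hae : ∀ᵐ ω ∂μ, ∀ i j, |h i j ω| < 1 := by
    rw [ae_all_iff]
    intro i
    rw [ae_all_iff]
    intro j
    exact hbdd i j
  -- Markov bound for each r
  have hmarkov : ∀ r : Fin n,
      μ (bad r) ≤ ENNReal.ofReal ((((T:ℝ)+1)/(c*L))^T) := by
    intro r
    have hXK_nonneg : ∀ ω, 0 ≤ (((Matrix.of fun i j => h i j ω) ^ a).mulVec u r) ^ K := by
      intro ω
      rw [hK, Nat.mul_comm 2 k, pow_mul]
      exact sq_nonneg _
    have hXb : ∀ᵐ ω ∂μ, |((Matrix.of fun i j => h i j ω) ^ a).mulVec u r| ≤ (n:ℝ)^a * S := by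
      filter_upwards [hae] with ω hω
      rw [stmt9_expand]
      calc |∑ p : Fin a → Fin n,
            (∏ i : Fin a, (Matrix.of fun i j => h i j ω)
              ((Fin.cons (α := fun _ => Fin n) r p) i.castSucc) (p i))
              * u ((Fin.cons (α := fun _ => Fin n) r p) (Fin.last a))|
          ≤ ∑ p : Fin a → Fin n,
            |(∏ i : Fin a, (Matrix.of fun i j => h i j ω)
              ((Fin.cons (α := fun _ => Fin n) r p) i.castSucc) (p i))
              * u ((Fin.cons (α := fun _ => Fin n) r p) (Fin.last a))| :=
            Finset.abs_sum_le_sum_abs _ _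
        _ ≤ ∑ _p : Fin a → Fin n, S := by
            refine Finset.sum_le_sum fun p _ => ?_
            rw [abs_mul]
            have hb1 : |∏ i : Fin a, (Matrix.of fun i j => h i j ω)
                ((Fin.cons (α := fun _ => Fin n) r p) i.castSucc) (p i)| ≤ 1 := by
              rw [Finset.abs_prod]
              exact Finset.prod_le_one (fun _ _ => abs_nonneg _) fun i _ => (hω _ _).le
            exact (mul_le_mul hb1 (hules _) (abs_nonneg _) zero_le_one).trans_eq (one_mul S)
        _ = (n:ℝ)^a * S := by
            rw [Finset.sum_const, Finset.card_univ]
            simp only [Fintype.card_fun, Fintype.card_fin, nsmul_eq_mul]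
            push_cast
            ring
    have hXint : Integrable
        (fun ω => (((Matrix.of fun i j => h i j ω) ^ a).mulVec u r) ^ K) μ := by
      refine Integrable.mono' (integrable_const (((n:ℝ)^a * S)^K))
        ((hXmeas r).pow_const K).aestronglyMeasurable ?_
      filter_upwards [hXb] with ω hω
      rw [Real.norm_eq_abs, abs_pow]
      exact pow_le_pow_left₀ (abs_nonneg _) hω K
    have h1 := mul_meas_ge_le_integral_of_nonneg (ae_of_all μ hXK_nonneg) hXint (t ^ K)
    have hmomR := stmt9_moment μ h hmeas hsymm hindep hmean hbdd
      (fun i j => hmom i j 2 le_rfl (by push_cast; linarith)) u r a K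
    have hsub : bad r ⊆
        {ω | t ^ K ≤ (((Matrix.of fun i j => h i j ω) ^ a).mulVec u r) ^ K} := by
      intro ω hω
      simp only [hbad, Set.mem_setOf_eq] at hω ⊢
      calc t ^ K ≤ |((Matrix.of fun i j => h i j ω) ^ a).mulVec u r| ^ K :=
            pow_le_pow_left₀ ht0.le hω.le K
        _ = (((Matrix.of fun i j => h i j ω) ^ a).mulVec u r) ^ K := by
            rw [pow_abs, abs_of_nonneg (hXK_nonneg ω)]
    have hfin : μ {ω | t ^ K ≤ (((Matrix.of fun i j => h i j ω) ^ a).mulVec u r) ^ K} ≠ ⊤ :=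
      measure_ne_top μ _
    have h2 : (μ {ω | t ^ K ≤ (((Matrix.of fun i j => h i j ω) ^ a).mulVec u r) ^ K}).toReal
        ≤ (S ^ K * (((T:ℝ)+1) ^ T)) / t ^ K := by
      rw [le_div_iff₀ (pow_pos ht0 K)]
      have h3 := h1.trans (hmomR.trans_eq (by rw [← hSu, ← hT]))
      rw [measureReal_def] at h3
      linarith
    calc μ (bad r)
        ≤ μ {ω | t ^ K ≤ (((Matrix.of fun i j => h i j ω) ^ a).mulVec u r) ^ K} :=
          measure_mono hsub
      _ = ENNReal.ofReal ((μ {ω | t ^ K ≤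
            (((Matrix.of fun i j => h i j ω) ^ a).mulVec u r) ^ K}).toReal) :=
          (ENNReal.ofReal_toReal hfin).symm
      _ ≤ ENNReal.ofReal ((S ^ K * (((T:ℝ)+1) ^ T)) / t ^ K) := ENNReal.ofReal_le_ofReal h2
      _ = ENNReal.ofReal ((((T:ℝ)+1)/(c*L))^T) := by
          congr 1
          rw [ht, mul_pow, ← pow_mul]
          have haK : a * K = T := by rw [hT]; ring
          rw [haK, div_pow]
          rw [div_eq_div_iff (by positivity) (by positivity)]
          ring
  -- the good event is the complement of the union of bad events
  have hgood : {ω : Ω | ∀ r : Fin n,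
      |((Matrix.of fun i j => h i j ω) ^ a).mulVec u r| ≤ (c * L) ^ a * S}
      = (⋃ r, bad r)ᶜ := by
    ext ω
    simp only [Set.mem_setOf_eq, Set.mem_compl_iff, Set.mem_iUnion, not_exists, hbad,
      not_lt, ← ht]
  have hbigmeas : MeasurableSet (⋃ r, bad r) := MeasurableSet.iUnion hbadmeas
  -- numeric bound
  have hnum2 : ((((T:ℝ)+1)/(c*L)))^T ≤ (c/4) ^ (-(2*L)) := by
    have hmain := stmt9_numeric haL hc25 hT1 hT2
    have hD : (0:ℝ) < c*L/((T:ℝ)+1) := by positivity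
    rw [Real.rpow_neg hc40.le]
    rw [show ((((T:ℝ)+1)/(c*L)))^T = ((c*L/((T:ℝ)+1)) ^ ((T:ℕ):ℝ))⁻¹ by
      rw [← Real.rpow_natCast (((T:ℝ)+1)/(c*L)) T, ← Real.inv_rpow hD.le, inv_div]]
    exact (inv_le_inv₀ (Real.rpow_pos_of_pos hD _) (Real.rpow_pos_of_pos (by positivity) _)).2
      hmain
  have hεeq : ε = (n:ℝ) * (c/4) ^ (-(2*L)) := by
    rw [hε, show (1:ℝ) - 2*Real.log (c/4) = 1 + (-(2* Real.log (c/4))) by ring,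
      Real.rpow_add hnR0, Real.rpow_one]
    congr 1
    rw [Real.rpow_def_of_pos hc40, Real.rpow_def_of_pos hnR0]
    congr 1
    rw [← hL]
    ring
  have hnum : (n:ℝ) * ((((T:ℝ)+1)/(c*L))^T) ≤ ε := by
    rw [hεeq]
    exact mul_le_mul_of_nonneg_left hnum2 (by positivity)
  have hunion : μ (⋃ r, bad r) ≤ ENNReal.ofReal ε := by
    calc μ (⋃ r, bad r) ≤ ∑' r : Fin n, μ (bad r) := measure_iUnion_le _
      _ = ∑ r : Fin n, μ (bad r) := tsum_fintype _
      _ ≤ ∑ _r : Fin n, ENNReal.ofReal ((((T:ℝ)+1)/(c*L))^T) :=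
          Finset.sum_le_sum fun r _ => hmarkov r
      _ = (n : ENNReal) * ENNReal.ofReal ((((T:ℝ)+1)/(c*L))^T) := by
          rw [Finset.sum_const, Finset.card_univ, Fintype.card_fin, nsmul_eq_mul]
      _ = ENNReal.ofReal ((n:ℝ) * ((((T:ℝ)+1)/(c*L))^T)) := by
          rw [ENNReal.ofReal_mul (by positivity), ENNReal.ofReal_natCast]
      _ ≤ ENNReal.ofReal ε := ENNReal.ofReal_le_ofReal hnum
  rw [ge_iff_le, hgood, measure_compl hbigmeas (measure_ne_top μ _), measure_univ]
  calc ENNReal.ofReal (1 - ε) = 1 - ENNReal.ofReal ε := by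
        rw [ENNReal.ofReal_sub _ hε0.le, ENNReal.ofReal_one]
    _ ≤ 1 - μ (⋃ r, bad r) := tsub_le_tsub_left hunion 1
end

section
/- Let X ∈ ℝ^{n×n} be symmetric of rank at most k, let P_k(M) = U*Σ(U*)ᵀ be a rank-k symmetric matrix with σ_k := σ_k(P_k(M)) > 0, and suppose ‖X − P_k(M)‖_F < σ_k/n². Decompose X = U*Λ₀(U*)ᵀ + U*Λ₁(U*_⊥)ᵀ + U*_⊥Λ₁ᵀ(U*)ᵀ + U*_⊥Λ₃(U*_⊥)ᵀ along the tangent space of P_k(M). Then ‖Σ − Λ₀‖_F ≤ ‖X − P_k(M)‖_F, ‖Λ₁‖_F ≤ ‖X − P_k(M)‖_F, and ‖Λ₃‖_F ≤ ‖X − P_k(M)‖_F/n² (the last via ‖Λ₃‖_F ≤ ‖X − P_k(M)‖_F²/σ_k(X)). -/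
open Matrix

noncomputable def frobNorm {m n : ℕ} (A : Matrix (Fin m) (Fin n) ℝ) : ℝ :=
  Real.sqrt (∑ i, ∑ j, (A i j) ^ 2)

namespace Stmt15Aux

noncomputable def fsq {m n : ℕ} (A : Matrix (Fin m) (Fin n) ℝ) : ℝ :=
  ∑ i, ∑ j, (A i j) ^ 2

lemma fsq_nonneg {m n : ℕ} (A : Matrix (Fin m) (Fin n) ℝ) : 0 ≤ fsq A := by
  refine Finset.sum_nonneg fun i _ => Finset.sum_nonneg fun j _ => sq_nonneg _

lemma frobNorm_eq {m n : ℕ} (A : Matrix (Fin m) (Fin n) ℝ) :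
    frobNorm A = Real.sqrt (fsq A) := rfl

lemma frobNorm_nonneg {m n : ℕ} (A : Matrix (Fin m) (Fin n) ℝ) : 0 ≤ frobNorm A :=
  Real.sqrt_nonneg _

lemma sq_frobNorm {m n : ℕ} (A : Matrix (Fin m) (Fin n) ℝ) : frobNorm A ^ 2 = fsq A :=
  Real.sq_sqrt (fsq_nonneg A)

lemma fsq_transpose {m n : ℕ} (A : Matrix (Fin m) (Fin n) ℝ) : fsq Aᵀ = fsq A := by
  unfold fsq
  rw [Finset.sum_comm]
  rfl

lemma fsq_neg {m n : ℕ} (A : Matrix (Fin m) (Fin n) ℝ) : fsq (-A) = fsq A := by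
  unfold fsq; simp

lemma fsq_eq_trace {m n : ℕ} (A : Matrix (Fin m) (Fin n) ℝ) :
    fsq A = Matrix.trace (Aᵀ * A) := by
  unfold fsq
  simp only [Matrix.trace, Matrix.diag, Matrix.mul_apply, Matrix.transpose_apply]
  rw [Finset.sum_comm]
  simp [sq]

lemma fsq_mul_le {m n p : ℕ} (A : Matrix (Fin m) (Fin n) ℝ) (B : Matrix (Fin n) (Fin p) ℝ) :
    fsq (A * B) ≤ fsq A * fsq B := by
  unfold fsq
  calc ∑ i, ∑ j, ((A * B) i j) ^ 2
      ≤ ∑ i, ∑ j, (∑ l, (A i l) ^ 2) * (∑ l, (B l j) ^ 2) := by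
        refine Finset.sum_le_sum fun i _ => Finset.sum_le_sum fun j _ => ?_
        rw [Matrix.mul_apply]
        exact Finset.sum_mul_sq_le_sq_mul_sq _ _ _
    _ = (∑ i, ∑ l, (A i l) ^ 2) * (∑ l, ∑ j, (B l j) ^ 2) := by
        rw [Finset.sum_mul]
        refine Finset.sum_congr rfl fun i _ => ?_
        rw [← Finset.mul_sum]
        congr 1
        exact Finset.sum_comm
    _ = _ := by rfl

lemma frobNorm_mul_le {m n p : ℕ} (A : Matrix (Fin m) (Fin n) ℝ)
    (B : Matrix (Fin n) (Fin p) ℝ) : frobNorm (A * B) ≤ frobNorm A * frobNorm B := by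
  rw [frobNorm_eq, frobNorm_eq, frobNorm_eq, ← Real.sqrt_mul (fsq_nonneg A)]
  exact Real.sqrt_le_sqrt (fsq_mul_le A B)

noncomputable def enorm {m : ℕ} (v : Fin m → ℝ) : ℝ := Real.sqrt (∑ i, v i ^ 2)

lemma enorm_nonneg {m : ℕ} (v : Fin m → ℝ) : 0 ≤ enorm v := Real.sqrt_nonneg _

lemma enorm_sq {m : ℕ} (v : Fin m → ℝ) : enorm v ^ 2 = ∑ i, v i ^ 2 :=
  Real.sq_sqrt (Finset.sum_nonneg fun i _ => sq_nonneg _)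

lemma enorm_neg {m : ℕ} (v : Fin m → ℝ) : enorm (-v) = enorm v := by
  unfold enorm; simp

lemma sum_mul_le {m : ℕ} (v w : Fin m → ℝ) : ∑ i, v i * w i ≤ enorm v * enorm w := by
  have h := Finset.sum_mul_sq_le_sq_mul_sq Finset.univ v w
  have h2 : ∑ i, v i * w i ≤ |∑ i, v i * w i| := le_abs_self _
  refine h2.trans ?_
  rw [← Real.sqrt_sq_eq_abs]
  rw [enorm, enorm, ← Real.sqrt_mul (Finset.sum_nonneg fun i _ => sq_nonneg _)]
  exact Real.sqrt_le_sqrt h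

lemma enorm_triangle {m : ℕ} (v w : Fin m → ℝ) : enorm (v + w) ≤ enorm v + enorm w := by
  have h1 : enorm (v + w) ^ 2 ≤ (enorm v + enorm w) ^ 2 := by
    have hexp : ∑ i, (v + w) i ^ 2
        = (∑ i, v i ^ 2) + 2 * (∑ i, v i * w i) + ∑ i, w i ^ 2 := by
      rw [Finset.mul_sum, ← Finset.sum_add_distrib, ← Finset.sum_add_distrib]
      refine Finset.sum_congr rfl fun i _ => ?_
      simp [Pi.add_apply]; ring
    have hcs := sum_mul_le v w
    rw [enorm_sq, hexp]
    nlinarith [enorm_nonneg v, enorm_nonneg w, enorm_sq v, enorm_sq w]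
  have h2 : 0 ≤ enorm v + enorm w := add_nonneg (enorm_nonneg v) (enorm_nonneg w)
  nlinarith [enorm_nonneg (v + w)]

lemma enorm_eq_zero {m : ℕ} {v : Fin m → ℝ} (h : enorm v = 0) : v = 0 := by
  have hs : ∑ i, v i ^ 2 = 0 := by
    have := enorm_sq v
    rw [h] at this; simpa using this.symm
  funext i
  have := (Finset.sum_eq_zero_iff_of_nonneg (fun j _ => sq_nonneg (v j))).1 hs i (Finset.mem_univ i)
  exact pow_eq_zero_iff (by norm_num) |>.1 this

lemma enorm_mulVec_le {m p : ℕ} (M : Matrix (Fin m) (Fin p) ℝ) (v : Fin p → ℝ) :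
    enorm (M.mulVec v) ≤ frobNorm M * enorm v := by
  have hsq : ∑ i, (M.mulVec v) i ^ 2 ≤ (∑ i, ∑ j, M i j ^ 2) * ∑ j, v j ^ 2 := by
    rw [Finset.sum_mul]
    refine Finset.sum_le_sum fun i _ => ?_
    have : (M.mulVec v) i = ∑ j, M i j * v j := rfl
    rw [this]
    exact Finset.sum_mul_sq_le_sq_mul_sq _ _ _
  rw [enorm, frobNorm_eq, enorm, ← Real.sqrt_mul (fsq_nonneg M)]
  exact Real.sqrt_le_sqrt hsq

lemma enorm_diag_ge {m : ℕ} (d : Fin m → ℝ) (σ : ℝ) (hσ : 0 ≤ σ) (hd : ∀ i, σ ≤ |d i|)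
    (v : Fin m → ℝ) : σ * enorm v ≤ enorm ((Matrix.diagonal d).mulVec v) := by
  have hmv : (Matrix.diagonal d).mulVec v = fun i => d i * v i := by
    funext i; rw [Matrix.mulVec_diagonal]
  rw [hmv, enorm, enorm]
  have : σ * Real.sqrt (∑ i, v i ^ 2) = Real.sqrt (σ ^ 2 * ∑ i, v i ^ 2) := by
    rw [Real.sqrt_mul (sq_nonneg σ), Real.sqrt_sq hσ]
  rw [this]
  refine Real.sqrt_le_sqrt ?_
  rw [Finset.mul_sum]
  refine Finset.sum_le_sum fun i _ => ?_
  have h1 : σ ^ 2 ≤ d i ^ 2 := by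
    have := hd i
    nlinarith [abs_nonneg (d i), sq_abs (d i)]
  nlinarith [sq_nonneg (v i)]

lemma enorm_pos {m : ℕ} {v : Fin m → ℝ} (h : v ≠ 0) : 0 < enorm v := by
  rcases (enorm_nonneg v).lt_or_eq with h1 | h1
  · exact h1
  · exact absurd (enorm_eq_zero h1.symm) h

lemma enorm_zero {m : ℕ} : enorm (0 : Fin m → ℝ) = 0 := by
  unfold enorm; simp

lemma key_trace {n a b : ℕ} (E : Matrix (Fin n) (Fin n) ℝ) (hE : Eᵀ = E)
    (U : Matrix (Fin n) (Fin a) ℝ) (V : Matrix (Fin n) (Fin b) ℝ) :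
    Matrix.trace (E * (U * Uᵀ) * (E * (V * Vᵀ))) = fsq (Uᵀ * E * V) := by
  rw [fsq_eq_trace]
  have h1 : (Uᵀ * E * V)ᵀ = Vᵀ * E * U := by
    rw [Matrix.transpose_mul, Matrix.transpose_mul, Matrix.transpose_transpose, hE,
      ← Matrix.mul_assoc]
  rw [h1]
  have h2 : E * (U * Uᵀ) * (E * (V * Vᵀ)) = (E * U * Uᵀ * E * V) * Vᵀ := by
    simp only [Matrix.mul_assoc]
  rw [h2, Matrix.trace_mul_comm]
  congr 1
  simp only [Matrix.mul_assoc]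

lemma pyth {n k r : ℕ} (E : Matrix (Fin n) (Fin n) ℝ) (hE : Eᵀ = E)
    (Us : Matrix (Fin n) (Fin k) ℝ) (Uperp : Matrix (Fin n) (Fin r) ℝ)
    (hcompl : Us * Usᵀ + Uperp * Uperpᵀ = 1) :
    fsq E = fsq (Usᵀ * E * Us) + fsq (Usᵀ * E * Uperp) + fsq (Uperpᵀ * E * Us)
      + fsq (Uperpᵀ * E * Uperp) := by
  have h0 : fsq E = Matrix.trace (E * 1 * (E * 1)) := by
    rw [fsq_eq_trace, hE]; simp
  rw [h0, ← hcompl]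
  simp only [Matrix.mul_add, Matrix.add_mul, Matrix.trace_add]
  rw [key_trace E hE Us Us, key_trace E hE Us Uperp, key_trace E hE Uperp Us,
    key_trace E hE Uperp Uperp]
  ring

end Stmt15Aux

open Stmt15Aux

/-- Tangent-space decomposition bounds. -/
theorem stmt15 (n k : ℕ) (hn : 0 < n)
    (X : Matrix (Fin n) (Fin n) ℝ) (hXsymm : X.IsSymm) (hXrank : X.rank ≤ k)
    (Us : Matrix (Fin n) (Fin k) ℝ) (Uperp : Matrix (Fin n) (Fin (n - k)) ℝ)
    (d : Fin k → ℝ)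
    (hUs : Usᵀ * Us = 1) (hUperp : Uperpᵀ * Uperp = 1)
    (hcompl : Us * Usᵀ + Uperp * Uperpᵀ = 1)
    (PkM : Matrix (Fin n) (Fin n) ℝ) (hPkM : PkM = Us * Matrix.diagonal d * Usᵀ)
    (σk : ℝ) (hσk : σk = ⨅ i, |d i|) (hσpos : 0 < σk)
    (hclose : frobNorm (X - PkM) < σk / (n : ℝ) ^ 2) :
    frobNorm (Matrix.diagonal d - Usᵀ * X * Us) ≤ frobNorm (X - PkM) ∧
    frobNorm (Usᵀ * X * Uperp) ≤ frobNorm (X - PkM) ∧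
    frobNorm (Uperpᵀ * X * Uperp) ≤ frobNorm (X - PkM) / (n : ℝ) ^ 2 := by
  classical
  have hXt : Xᵀ = X := hXsymm
  set E := X - PkM with hE
  have hPkMt : PkMᵀ = PkM := by
    rw [hPkM, Matrix.transpose_mul, Matrix.transpose_mul, Matrix.transpose_transpose,
      Matrix.diagonal_transpose, Matrix.mul_assoc]
  have hEt : Eᵀ = E := by
    rw [hE, Matrix.transpose_sub, hXt, hPkMt]
  -- orthogonality
  have hUp' : ∀ {m : ℕ} (N : Matrix (Fin (n - k)) (Fin m) ℝ), Uperpᵀ * (Uperp * N) = N := by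
    intro m N; rw [← Matrix.mul_assoc, hUperp, Matrix.one_mul]
  have hUs' : ∀ {m : ℕ} (N : Matrix (Fin k) (Fin m) ℝ), Usᵀ * (Us * N) = N := by
    intro m N; rw [← Matrix.mul_assoc, hUs, Matrix.one_mul]
  have hZ : Uperpᵀ * Us = 0 := by
    have h := congrArg (fun M : Matrix (Fin n) (Fin n) ℝ => Uperpᵀ * (M * Us)) hcompl
    simp only [Matrix.add_mul, Matrix.mul_add, Matrix.mul_assoc, Matrix.one_mul] at h
    rw [hUs, Matrix.mul_one, hUp'] at h
    have h2 : Uperpᵀ * Us + Uperpᵀ * Us = Uperpᵀ * Us + 0 := by rw [add_zero]; exact h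
    exact add_left_cancel h2
  have hZ' : Usᵀ * Uperp = 0 := by
    have h := congrArg Matrix.transpose hZ
    simpa [Matrix.transpose_mul] using h
  -- components
  have hPkMUs : Usᵀ * PkM * Us = Matrix.diagonal d := by
    rw [hPkM]
    simp only [Matrix.mul_assoc]
    rw [hUs, Matrix.mul_one, hUs']
  have hL0 : Usᵀ * E * Us = Usᵀ * X * Us - Matrix.diagonal d := by
    rw [hE, Matrix.mul_sub, Matrix.sub_mul, hPkMUs]
  have hB : Usᵀ * E * Uperp = Usᵀ * X * Uperp := by
    rw [hE, Matrix.mul_sub, Matrix.sub_mul]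
    have : Usᵀ * PkM * Uperp = 0 := by
      rw [hPkM]
      simp only [Matrix.mul_assoc]
      rw [hZ', Matrix.mul_zero, Matrix.mul_zero, Matrix.mul_zero]
    rw [this, sub_zero]
  have hC : Uperpᵀ * E * Uperp = Uperpᵀ * X * Uperp := by
    rw [hE, Matrix.mul_sub, Matrix.sub_mul]
    have : Uperpᵀ * PkM * Uperp = 0 := by
      rw [hPkM]
      simp only [Matrix.mul_assoc]
      rw [hZ', Matrix.mul_zero, Matrix.mul_zero, Matrix.mul_zero]
    rw [this, sub_zero]
  have hBt : Uperpᵀ * E * Us = (Usᵀ * E * Uperp)ᵀ := by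
    rw [Matrix.transpose_mul, Matrix.transpose_mul, Matrix.transpose_transpose, hEt,
      ← Matrix.mul_assoc]
  have hpyth := pyth E hEt Us Uperp hcompl
  rw [hBt, fsq_transpose, hL0, hB, hC] at hpyth
  set e := frobNorm E with he
  have he2 : e ^ 2 = fsq E := sq_frobNorm E
  have he0 : 0 ≤ e := frobNorm_nonneg E
  have hfsqL0 : fsq (Usᵀ * X * Us - Matrix.diagonal d) ≤ fsq E := by
    have h1 := fsq_nonneg (Usᵀ * X * Uperp)
    have h2 := fsq_nonneg (Uperpᵀ * X * Uperp)
    linarith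
  have hfsqB : fsq (Usᵀ * X * Uperp) ≤ fsq E := by
    have h1 := fsq_nonneg (Usᵀ * X * Us - Matrix.diagonal d)
    have h2 := fsq_nonneg (Uperpᵀ * X * Uperp)
    have h3 := fsq_nonneg (Usᵀ * X * Uperp)
    linarith
  refine ⟨?_, ?_, ?_⟩
  · rw [frobNorm_eq, he, frobNorm_eq]
    refine Real.sqrt_le_sqrt ?_
    have hneg : Matrix.diagonal d - Usᵀ * X * Us = -(Usᵀ * X * Us - Matrix.diagonal d) :=
      (neg_sub _ _).symm
    rw [hneg, fsq_neg]
    exact hfsqL0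
  · rw [frobNorm_eq, he, frobNorm_eq]
    exact Real.sqrt_le_sqrt hfsqB
  · by_cases hr : n - k = 0
    · have hempty : IsEmpty (Fin (n - k)) := by rw [hr]; infer_instance
      have h0 : frobNorm (Uperpᵀ * X * Uperp) = 0 := by
        rw [frobNorm_eq]
        unfold Stmt15Aux.fsq
        rw [Finset.univ_eq_empty, Finset.sum_empty, Real.sqrt_zero]
      rw [h0]
      refine div_nonneg he0 (by positivity)
    · -- main case
      have hk : k ≠ 0 := by
        intro hk0
        subst hk0
        have : σk = 0 := by rw [hσk]; exact Real.iInf_of_isEmpty _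
        linarith
      have hn2 : 2 ≤ n := by omega
      have hn2R : (4 : ℝ) ≤ (n : ℝ) ^ 2 := by
        have h2n : (2 : ℝ) ≤ (n : ℝ) := by exact_mod_cast hn2
        nlinarith
      have hnpos : (0 : ℝ) < (n : ℝ) ^ 2 := by positivity
      have heσ : e * (n : ℝ) ^ 2 < σk := (lt_div_iff₀ hnpos).mp hclose
      have heσ' : e < σk := by nlinarith
      have hσd : (0 : ℝ) < σk - e := by linarith
      set A := Usᵀ * X * Us with hA
      have hfΛ : frobNorm (A - Matrix.diagonal d) ≤ e := by
        rw [frobNorm_eq, he, frobNorm_eq]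
        exact Real.sqrt_le_sqrt hfsqL0
      have hbdd : BddBelow (Set.range fun i => |d i|) :=
        ⟨0, by rintro x ⟨i, rfl⟩; exact abs_nonneg _⟩
      have hσle : ∀ i, σk ≤ |d i| := fun i => hσk ▸ ciInf_le hbdd i
      have hkey : ∀ w : Fin k → ℝ, (σk - e) * Stmt15Aux.enorm w ≤ Stmt15Aux.enorm (A.mulVec w) := by
        intro w
        have h1 : σk * Stmt15Aux.enorm w ≤ Stmt15Aux.enorm ((Matrix.diagonal d).mulVec w) :=
          Stmt15Aux.enorm_diag_ge d σk hσpos.le hσle w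
        have hdm : (Matrix.diagonal d).mulVec w
            = A.mulVec w + -((A - Matrix.diagonal d).mulVec w) := by
          rw [Matrix.sub_mulVec]; abel
        have h2 : Stmt15Aux.enorm ((Matrix.diagonal d).mulVec w)
            ≤ Stmt15Aux.enorm (A.mulVec w) + Stmt15Aux.enorm ((A - Matrix.diagonal d).mulVec w) := by
          rw [hdm]
          exact (Stmt15Aux.enorm_triangle _ _).trans (by rw [Stmt15Aux.enorm_neg])
        have h3 : Stmt15Aux.enorm ((A - Matrix.diagonal d).mulVec w) ≤ e * Stmt15Aux.enorm w :=
          (Stmt15Aux.enorm_mulVec_le _ w).trans (mul_le_mul_of_nonneg_right hfΛ (Stmt15Aux.enorm_nonneg w))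
        rw [sub_mul]
        linarith
      have hdet : A.det ≠ 0 := by
        intro hdet0
        obtain ⟨v, hv, hAv⟩ := Matrix.exists_mulVec_eq_zero_iff.mpr hdet0
        have h1 := hkey v
        rw [hAv, Stmt15Aux.enorm_zero] at h1
        have h2 := Stmt15Aux.enorm_pos hv
        exact absurd h1 (not_le.mpr (mul_pos hσd h2))
      have hAunit : IsUnit A := (Matrix.isUnit_iff_isUnit_det A).2 (isUnit_iff_ne_zero.2 hdet)
      have hrankA : A.rank = k := by rw [Matrix.rank_of_isUnit A hAunit, Fintype.card_fin]
      have hSR : LinearMap.range (X * Us).mulVecLin ≤ LinearMap.range X.mulVecLin := by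
        rw [Matrix.mulVecLin_mul]
        exact LinearMap.range_comp_le_range _ _
      have hkS : k ≤ (X * Us).rank := by
        calc k = A.rank := hrankA.symm
          _ = (Usᵀ * (X * Us)).rank := by rw [← Matrix.mul_assoc]
          _ ≤ (X * Us).rank := Matrix.rank_mul_le_right _ _
      have hEq : LinearMap.range (X * Us).mulVecLin = LinearMap.range X.mulVecLin :=
        Submodule.eq_of_le_of_finrank_le hSR (hXrank.trans hkS)
      have hWex : ∀ j : Fin (n - k), ∃ w : Fin k → ℝ,
          (X * Us).mulVec w = X.mulVec (fun i => Uperp i j) := by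
        intro j
        have hmem : X.mulVec (fun i => Uperp i j) ∈ LinearMap.range X.mulVecLin :=
          ⟨fun i => Uperp i j, rfl⟩
        rw [← hEq] at hmem
        obtain ⟨w, hw⟩ := hmem
        exact ⟨w, hw⟩
      choose W hWs using hWex
      set Wm : Matrix (Fin k) (Fin (n - k)) ℝ := Matrix.of (fun l j => W j l) with hWm
      have hXUp : X * Uperp = X * Us * Wm := by
        ext i j
        have h := congrFun (hWs j) i
        simp only [Matrix.mulVec, Matrix.mul_apply, dotProduct] at h ⊢
        rw [← h]
        rfl
      have hBW : Usᵀ * X * Uperp = A * Wm := by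
        rw [Matrix.mul_assoc, hXUp, ← Matrix.mul_assoc, ← Matrix.mul_assoc, ← hA]
      have hXUsT : (Usᵀ * X * Uperp)ᵀ = Uperpᵀ * X * Us := by
        rw [Matrix.transpose_mul, Matrix.transpose_mul, Matrix.transpose_transpose, hXt,
          ← Matrix.mul_assoc]
      have hCW : Uperpᵀ * X * Uperp = (Usᵀ * X * Uperp)ᵀ * Wm := by
        rw [hXUsT, Matrix.mul_assoc, hXUp, ← Matrix.mul_assoc, ← Matrix.mul_assoc]
      set Bm := Usᵀ * X * Uperp with hBmdef
      have hcol : ∀ j, (σk - e) ^ 2 * (∑ l, Wm l j ^ 2) ≤ ∑ i, Bm i j ^ 2 := by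
        intro j
        have h1 := hkey (W j)
        have h2 : A.mulVec (W j) = fun i => Bm i j := by
          funext i
          have := congrFun (congrFun hBW i) j
          simpa [Matrix.mulVec, Matrix.mul_apply, dotProduct, hWm] using this.symm
        rw [h2] at h1
        have h3 : Stmt15Aux.enorm (W j) ^ 2 = ∑ l, Wm l j ^ 2 := Stmt15Aux.enorm_sq (W j)
        have h4 : Stmt15Aux.enorm (fun i => Bm i j) ^ 2 = ∑ i, Bm i j ^ 2 := Stmt15Aux.enorm_sq _
        have h5 : ((σk - e) * Stmt15Aux.enorm (W j)) ^ 2 ≤ Stmt15Aux.enorm (fun i => Bm i j) ^ 2 :=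
          pow_le_pow_left₀ (mul_nonneg hσd.le (Stmt15Aux.enorm_nonneg _)) h1 2
        calc (σk - e) ^ 2 * ∑ l, Wm l j ^ 2 = ((σk - e) * Stmt15Aux.enorm (W j)) ^ 2 := by
              rw [mul_pow, h3]
          _ ≤ Stmt15Aux.enorm (fun i => Bm i j) ^ 2 := h5
          _ = ∑ i, Bm i j ^ 2 := h4
      have hWB : (σk - e) ^ 2 * fsq Wm ≤ fsq Bm := by
        unfold Stmt15Aux.fsq
        rw [Finset.sum_comm (f := fun i j => Wm i j ^ 2), Finset.mul_sum]
        calc ∑ j, (σk - e) ^ 2 * ∑ l, Wm l j ^ 2 ≤ ∑ j, ∑ i, Bm i j ^ 2 :=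
              Finset.sum_le_sum fun j _ => hcol j
          _ = ∑ i, ∑ j, Bm i j ^ 2 := Finset.sum_comm
      set b := frobNorm Bm with hb
      have hb0 : 0 ≤ b := frobNorm_nonneg _
      have hb2 : b ^ 2 = fsq Bm := sq_frobNorm _
      set fW := frobNorm Wm with hfW
      have hfW0 : 0 ≤ fW := frobNorm_nonneg _
      have hfW2 : fW ^ 2 = fsq Wm := sq_frobNorm _
      have hcB : frobNorm (Uperpᵀ * X * Uperp) ≤ b * fW := by
        rw [hCW]
        refine (frobNorm_mul_le _ _).trans ?_
        have : frobNorm Bmᵀ = b := by rw [frobNorm_eq, fsq_transpose, hb, frobNorm_eq]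
        rw [this]
      set c := frobNorm (Uperpᵀ * X * Uperp) with hc
      have hc0 : 0 ≤ c := frobNorm_nonneg _
      have h2b : 2 * b ^ 2 ≤ e ^ 2 := by
        have h1 := fsq_nonneg (Usᵀ * X * Us - Matrix.diagonal d)
        have h2 := fsq_nonneg (Uperpᵀ * X * Uperp)
        rw [he2, hb2]
        linarith
      -- conclude
      rw [le_div_iff₀ hnpos]
      -- fW * (σk - e) ≤ b
      have hfWb : fW * (σk - e) ≤ b := by
        have hsq : (fW * (σk - e)) ^ 2 ≤ b ^ 2 := by
          rw [mul_pow, hfW2, hb2, mul_comm]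
          exact hWB
        have h1 := Real.sqrt_le_sqrt hsq
        rwa [Real.sqrt_sq (mul_nonneg hfW0 hσd.le), Real.sqrt_sq hb0] at h1
      have hcs : c * (σk - e) ≤ b ^ 2 := by
        calc c * (σk - e) ≤ (b * fW) * (σk - e) :=
              mul_le_mul_of_nonneg_right hcB hσd.le
          _ = b * (fW * (σk - e)) := by ring
          _ ≤ b * b := mul_le_mul_of_nonneg_left hfWb hb0
          _ = b ^ 2 := (sq b).symm
      have key : c * (n : ℝ) ^ 2 * (2 * (σk - e)) ≤ e * (2 * (σk - e)) := by
        have k2 : 2 * (n : ℝ) ^ 2 * (c * (σk - e)) ≤ 2 * (n : ℝ) ^ 2 * b ^ 2 :=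
          mul_le_mul_of_nonneg_left hcs (by positivity)
        have k4 : (n : ℝ) ^ 2 * (2 * b ^ 2) ≤ (n : ℝ) ^ 2 * e ^ 2 :=
          mul_le_mul_of_nonneg_left h2b (by positivity)
        have k5 : e * (e * (n : ℝ) ^ 2) ≤ e * σk := mul_le_mul_of_nonneg_left heσ.le he0
        have k6 : (0 : ℝ) ≤ ((n : ℝ) ^ 2 - 2) * e ^ 2 :=
          mul_nonneg (by linarith) (sq_nonneg e)
        linarith only [k2, k4, k5, k6]
      exact le_of_mul_le_mul_right key (by positivity)
end
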